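/- arXiv:2310.16022 — 3 statements merged into one kernel-verified Lean document; each statement's English description precedes it below -/
import Mathlib

section
/- Reliable normalizations agree on colors: if v is u-reliable, y is x-reliable, and u·v^ω = x·y^ω as infinite words, then col_u(v) = col_x(y). -/
open scoped Classical

/-- Concatenation of a finite word with an infinite word. -/
def wcat {A : Type} (u : List A) (w : ℕ → A) : ℕ → A :=
  fun n => if h : n < u.length then u.get ⟨n, h⟩ else w (n - u.length)

/-- The infinite periodic word `v^ω`. -/
def wpow {A : Type} [Inhabited A] (v : List A) : ℕ → A :=
  fun n => v.getD (n % v.length) default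

/-- The ultimately periodic word `u · v^ω`. -/
def upw {A : Type} [Inhabited A] (u v : List A) : ℕ → A := wcat u (wpow v)

/-- The finite word `v^i`. -/
def wrep {A : Type} (v : List A) (i : ℕ) : List A := (List.replicate i v).flatten

/-- The right congruence `x ∼_L y`. -/
def simL {A : Type} (L : Set (ℕ → A)) (x y : List A) : Prop :=
  ∀ w : ℕ → A, wcat x w ∈ L ↔ wcat y w ∈ L

/-- `w` is `u`-invariant: `u ∼_L u·w`. -/
def UInv {A : Type} (L : Set (ℕ → A)) (u w : List A) : Prop := simL L u (u ++ w)

/-- `v` is relevant to `u`. -/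
def URel {A : Type} (L : Set (ℕ → A)) (u v : List A) : Prop :=
  ∃ z : List A, UInv L u (v ++ z)

/-- `v` has natural color at most `c` wrt `u`. -/
def ColorAtMost {A : Type} [Inhabited A] (L : Set (ℕ → A)) (u : List A) :
    ℕ → List A → Prop
  | c, v => ∀ z : List A, UInv L u (v ++ z) →
      ((upw u (v ++ z) ∈ L ↔ Even c) ∨
        ∃ i : ℕ, 0 < i ∧ ∃ c' : Fin c, ColorAtMost L u c' (wrep (v ++ z) i))
  termination_by c => c
  decreasing_by exact c'.isLt

/-- The natural color of the finite word `v` wrt `u`: `⊥` (i.e. `-∞`) if `v` is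
irrelevant to `u`, and otherwise the minimal `c ≥ 0` as in the paper. -/
noncomputable def ncol {A : Type} [Inhabited A] (L : Set (ℕ → A)) (u v : List A) :
    WithBot ℕ :=
  if URel L u v then ((sInf {c : ℕ | ColorAtMost L u c v} : ℕ) : WithBot ℕ) else ⊥

/-- `v` is stable wrt `u`. -/
def Stable {A : Type} [Inhabited A] (L : Set (ℕ → A)) (u v : List A) : Prop :=
  ∀ i : ℕ, 0 < i → ncol L u v = ncol L u (wrep v i)

/-- `v` is `u`-reliable. -/
def UReliable {A : Type} [Inhabited A] (L : Set (ℕ → A)) (u v : List A) : Prop :=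
  UInv L u v ∧ Stable L u v

/-- The natural color of an ultimately periodic infinite word. -/
noncomputable def icol {A : Type} [Inhabited A] (L : Set (ℕ → A)) (w : ℕ → A) : ℕ :=
  sInf {c : ℕ | ∃ u v : List A, v ≠ [] ∧ w = upw u v ∧ UInv L u v ∧
    ncol L u v = (c : WithBot ℕ)}

/-- The set of states visited infinitely often by a run. -/
def infSet {Q : Type} (r : ℕ → Q) : Set Q := {q | ∀ n : ℕ, ∃ m : ℕ, n ≤ m ∧ r m = q}

/-- The run of a complete deterministic automaton on an infinite word. -/
def runOf {A Q : Type} (δ : Q → A → Q) (q0 : Q) (w : ℕ → A) : ℕ → Q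
  | 0 => q0
  | n + 1 => δ (runOf δ q0 w n) (w n)

/-- `L` is ω-regular: recognized by some deterministic Muller automaton. -/
def OmegaRegular {A : Type} (L : Set (ℕ → A)) : Prop :=
  ∃ (Q : Type) (_ : Fintype Q) (q0 : Q) (δ : Q → A → Q) (α : Set (Set Q)),
    ∀ w : ℕ → A, w ∈ L ↔ infSet (runOf δ q0 w) ∈ α


section Aux
set_option linter.unusedSectionVars false

variable {A : Type} [Inhabited A]

theorem wcat_lt (x : List A) (w : ℕ → A) {n : ℕ} (h : n < x.length) :
    wcat x w n = x[n] := by simp [wcat, dif_pos h]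

theorem wcat_ge' (x : List A) (w : ℕ → A) {n : ℕ} (h : x.length ≤ n) :
    wcat x w n = w (n - x.length) := by
  simp only [wcat]; rw [dif_neg (by omega)]

theorem wcat_ge (x : List A) (w : ℕ → A) (m : ℕ) :
    wcat x w (x.length + m) = w m := by
  rw [wcat_ge' x w (by omega)]; congr 1; omega

theorem wcat_append (x y : List A) (w : ℕ → A) :
    wcat (x ++ y) w = wcat x (wcat y w) := by
  funext n
  rcases lt_or_ge n x.length with h | h
  · rw [wcat_lt _ _ (by simp; omega), wcat_lt _ _ h, List.getElem_append_left h]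
  · rw [wcat_ge' x _ h]
    rcases lt_or_ge n (x.length + y.length) with h2 | h2
    · rw [wcat_lt _ _ (by simp; omega), wcat_lt _ _ (by omega),
        List.getElem_append_right h]
    · rw [wcat_ge' _ _ (by simp; omega), wcat_ge' _ _ (by omega)]
      congr 1; simp; omega

theorem wrep_succ (v : List A) (i : ℕ) : wrep v (i + 1) = v ++ wrep v i := by
  simp [wrep, List.replicate_succ]

theorem length_wrep (v : List A) (i : ℕ) : (wrep v i).length = i * v.length := by
  induction i with
  | zero => simp [wrep]
  | succ n ih => rw [wrep_succ, List.length_append, ih, Nat.succ_mul]; omega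

theorem wrep_zero (v : List A) : wrep v 0 = [] := rfl

theorem wrep_one (v : List A) : wrep v 1 = v := by simp [wrep]

theorem wrep_add (v : List A) (m n : ℕ) : wrep v (m + n) = wrep v m ++ wrep v n := by
  induction m with
  | zero => simp [wrep_zero]
  | succ k ih => rw [Nat.succ_add, wrep_succ, wrep_succ, ih, List.append_assoc]

theorem wrep_mul (v : List A) (a b : ℕ) : wrep (wrep v a) b = wrep v (b * a) := by
  induction b with
  | zero => simp [wrep_zero]
  | succ k ih => rw [wrep_succ, ih, Nat.succ_mul, Nat.add_comm, wrep_add]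

theorem getD_wrep (v : List A) {i k : ℕ} (d : A) (h : k < i * v.length) :
    (wrep v i).getD k d = v.getD (k % v.length) d := by
  induction i generalizing k with
  | zero => omega
  | succ m ih =>
    have hv : 0 < v.length := by by_contra h'; simp at h'; simp [h'] at h
    rw [wrep_succ]
    rcases lt_or_ge k v.length with h2 | h2
    · rw [Nat.mod_eq_of_lt h2, List.getD_eq_getElem _ _ (by simp [length_wrep]; omega),
        List.getD_eq_getElem _ _ h2, List.getElem_append_left h2]
    · have h3 : k - v.length < m * v.length := by
        rw [Nat.succ_mul] at h; omega
      rw [List.getD_eq_getElem _ _ (by simp [length_wrep]; rw [Nat.succ_mul] at h; omega),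
        List.getElem_append_right h2,
        ← List.getD_eq_getElem (wrep v m) d (by rw [length_wrep]; exact h3), ih h3]
      congr 1
      conv_rhs => rw [show k = v.length + (k - v.length) by omega]
      rw [Nat.add_mod_left]

theorem wpow_wrep {v : List A} {i : ℕ} (hi : 0 < i) (hv : v ≠ []) :
    wpow (wrep v i) = wpow v := by
  have hv' : 0 < v.length := List.length_pos_iff.mpr hv
  funext n
  have hlen : (wrep v i).length = i * v.length := length_wrep v i
  have hpos : 0 < i * v.length := by positivity
  simp only [wpow, hlen]
  rw [getD_wrep v default (Nat.mod_lt _ hpos), Nat.mod_mod_of_dvd _ ⟨i, by ring⟩]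

theorem wpow_rot (a r : List A) : wcat a (wpow (r ++ a)) = wpow (a ++ r) := by
  funext n
  rcases Nat.eq_zero_or_pos (a.length + r.length) with h0 | h0
  · have ha : a = [] := by
      have := List.length_eq_zero_iff.mp (by omega : a.length = 0); exact this
    have hr : r = [] := List.length_eq_zero_iff.mp (by omega)
    subst ha; subst hr; simp [wcat, wpow]
  rcases lt_or_ge n a.length with h | h
  · rw [wcat_lt _ _ h]
    simp only [wpow, List.length_append]
    rw [Nat.mod_eq_of_lt (by omega), List.getD_eq_getElem _ _ (by simp; omega),
      List.getElem_append_left h]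
  · rw [wcat_ge' _ _ h]
    simp only [wpow, List.length_append]
    set m := n - a.length with hm
    have hlen : r.length + a.length = a.length + r.length := by omega
    rw [hlen]
    set len := a.length + r.length with hl
    have hn : n = m + a.length := by omega
    rw [hn]
    set k := m % len with hk
    have hklt : k < len := Nat.mod_lt _ h0
    have : (m + a.length) % len = (k + a.length) % len := by
      conv_lhs => rw [show m + a.length = len * (m / len) + (k + a.length) by
        rw [hk]; have := Nat.div_add_mod m len; omega]
      rw [Nat.mul_add_mod]
    rw [this]
    rcases lt_or_ge k r.length with h2 | h2
    · rw [Nat.mod_eq_of_lt (by omega)]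
      rw [List.getD_eq_getElem _ _ (by simp; omega), List.getD_eq_getElem _ _ (by simp; omega),
        List.getElem_append_right (by omega : a.length ≤ k + a.length),
        List.getElem_append_left h2]
      congr 1; omega
    · have : (k + a.length) % len = k - r.length := by
        conv_lhs => rw [show k + a.length = len + (k - r.length) by omega]
        rw [Nat.add_mod_left, Nat.mod_eq_of_lt (by omega)]
      rw [this]
      rw [List.getD_eq_getElem _ _ (by simp; omega), List.getD_eq_getElem _ _ (by simp; omega),
        List.getElem_append_right h2, List.getElem_append_left (by omega)]


variable {L : Set (ℕ → A)}

theorem simL_refl (x : List A) : simL L x x := fun _ => Iff.rfl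
theorem simL_symm {x y : List A} (h : simL L x y) : simL L y x := fun w => (h w).symm
theorem simL_trans {x y z : List A} (h : simL L x y) (h' : simL L y z) : simL L x z :=
  fun w => (h w).trans (h' w)
theorem simL_append {x y : List A} (a : List A) (h : simL L x y) :
    simL L (x ++ a) (y ++ a) := fun w => by
  rw [wcat_append, wcat_append]; exact h (wcat a w)

theorem uinv_congr {U U' : List A} (hs : simL L U U') (m : List A) :
    UInv L U m ↔ UInv L U' m := by
  unfold UInv simL
  constructor
  · intro h w
    simp only [wcat_append] at *
    exact ((hs w).symm.trans (h w)).trans (hs (wcat m w))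
  · intro h w
    simp only [wcat_append] at *
    exact ((hs w).trans (h w)).trans ((hs (wcat m w)).symm)

theorem uinv_pow {u v : List A} (h : UInv L u v) (k : ℕ) :
    simL L u (u ++ wrep v k) := by
  induction k with
  | zero => rw [wrep_zero, List.append_nil]; exact simL_refl u
  | succ m ih =>
    have h2 : simL L (u ++ wrep v m) ((u ++ v) ++ wrep v m) := simL_append _ h
    rw [List.append_assoc, ← wrep_succ] at h2
    exact simL_trans ih h2

theorem cam_mono {u : List A} {c : ℕ} {v : List A} (h : ColorAtMost L u c v)
    (z : List A) : ColorAtMost L u c (v ++ z) := by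
  rw [ColorAtMost] at h ⊢
  intro z' hinv
  rw [List.append_assoc] at hinv ⊢
  exact h (z ++ z') hinv

theorem cam_congr {U U' : List A} (hs : simL L U U') :
    ∀ c (v : List A), ColorAtMost L U c v → ColorAtMost L U' c v := by
  intro c
  induction c using Nat.strong_induction_on with
  | _ c IH =>
    intro v h
    rw [ColorAtMost] at h ⊢
    intro z hinv
    rcases h z ((uinv_congr hs _).mpr hinv) with hm | ⟨i, hi, c', hc⟩
    · left
      exact (hs (wpow (v ++ z))).symm.trans hm
    · right
      exact ⟨i, hi, c', IH c'.val c'.isLt _ hc⟩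

theorem cam_not_iff (U : List A) (c : ℕ) (v : List A) :
    ¬ ColorAtMost L U c v ↔ ∃ z, UInv L U (v ++ z) ∧
      ¬(upw U (v ++ z) ∈ L ↔ Even c) ∧
      ∀ i, 0 < i → ∀ c' : Fin c, ¬ ColorAtMost L U c'.val (wrep (v ++ z) i) := by
  rw [ColorAtMost]
  push_neg
  constructor
  · rintro ⟨z, h1, h2, h3⟩
    exact ⟨z, h1, h2, fun i hi c' => h3 i hi c'⟩
  · rintro ⟨z, h1, h2, h3⟩
    exact ⟨z, h1, h2, fun i hi c' => h3 i hi c'⟩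

theorem wrep_rot (a b : List A) (j : ℕ) : wrep (a ++ b) (j+1) = a ++ (wrep (b ++ a) j ++ b) := by
  induction j with
  | zero => rw [wrep_one, wrep_zero]; simp
  | succ k ih =>
    rw [wrep_succ, ih, wrep_succ]
    simp [List.append_assoc]


theorem rot : ∀ (c : ℕ) (U a b : List A),
    (∀ i, 0 < i → ¬ ColorAtMost L U c (wrep (a ++ b) i)) →
    ∀ i, 0 < i → ¬ ColorAtMost L (U ++ a) c (wrep (b ++ a) i) := by
  intro c
  induction c using Nat.strong_induction_on with
  | _ c IH =>
    intro U a b h j hj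
    obtain ⟨z, hinv, hmem, hrec⟩ := (cam_not_iff U c _).mp (h (j + 1) (by omega))
    set r : List A := wrep (b ++ a) j ++ (b ++ z) with hr
    have hp : wrep (a ++ b) (j + 1) ++ z = a ++ r := by
      rw [hr, wrep_rot]
      simp [List.append_assoc]
    rw [hp] at hinv hmem hrec
    rw [cam_not_iff]
    refine ⟨b ++ z ++ a, ?_, ?_, ?_⟩
    · have hq : wrep (b ++ a) j ++ (b ++ z ++ a) = r ++ a := by
        rw [hr]; simp [List.append_assoc]
      rw [hq]
      have h2 : simL L (U ++ a) ((U ++ (a ++ r)) ++ a) := simL_append a hinv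
      have h3 : (U ++ (a ++ r)) ++ a = (U ++ a) ++ (r ++ a) := by
        simp [List.append_assoc]
      rw [h3] at h2
      exact h2
    · have hq : wrep (b ++ a) j ++ (b ++ z ++ a) = r ++ a := by
        rw [hr]; simp [List.append_assoc]
      rw [hq]
      have hup : upw (U ++ a) (r ++ a) = upw U (a ++ r) := by
        unfold upw
        rw [wcat_append, wpow_rot]
      rw [hup]
      exact hmem
    · intro i hi c'
      have hq : wrep (b ++ a) j ++ (b ++ z ++ a) = r ++ a := by
        rw [hr]; simp [List.append_assoc]
      rw [hq]
      have hB : ∀ i, 0 < i → ¬ ColorAtMost L U c'.val (wrep (a ++ r) i) :=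
        fun i hi => hrec i hi c'
      exact IH c'.val c'.isLt U a r hB i hi

/-- `c` is an achievable color for some power of `v` over `u`. -/
def ExPow (L : Set (ℕ → A)) (c : ℕ) (u v : List A) : Prop :=
  ∃ i, 0 < i ∧ ColorAtMost L u c (wrep v i)

theorem expow_rot {c : ℕ} {U a b : List A} (h : ExPow L c (U ++ a) (b ++ a)) :
    ExPow L c U (a ++ b) := by
  by_contra hn
  obtain ⟨i, hi, hcam⟩ := h
  exact rot c U a b (fun i hi hc => hn ⟨i, hi, hc⟩) i hi hcam

theorem expow_congr {U U' : List A} (hs : simL L U U') (c : ℕ) (v : List A)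
    (h : ExPow L c U v) : ExPow L c U' v := by
  obtain ⟨i, hi, hcam⟩ := h
  exact ⟨i, hi, cam_congr hs c _ hcam⟩

theorem expow_rot_iff {c : ℕ} {U a b : List A} (hinv : UInv L U (a ++ b)) :
    ExPow L c U (a ++ b) ↔ ExPow L c (U ++ a) (b ++ a) := by
  constructor
  · intro h
    apply expow_rot (L := L) (U := U ++ a) (a := b) (b := a)
    apply expow_congr (U := U) _ c (a ++ b) h
    have : U ++ (a ++ b) = (U ++ a) ++ b := by simp [List.append_assoc]
    rw [← this]
    exact hinv
  · exact expow_rot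

theorem expow_powers {c : ℕ} {u v : List A} {j : ℕ} (hj : 0 < j) :
    ExPow L c u (wrep v j) ↔ ExPow L c u v := by
  constructor
  · rintro ⟨i, hi, hcam⟩
    rw [wrep_mul] at hcam
    exact ⟨i * j, by positivity, hcam⟩
  · rintro ⟨i, hi, hcam⟩
    refine ⟨i, hi, ?_⟩
    rw [wrep_mul]
    have : wrep v (i * j) = wrep v i ++ wrep v (i * j - i) := by
      rw [← wrep_add]
      congr 1
      have : i ≤ i * j := Nat.le_mul_of_pos_right i hj
      omega
    rw [this]
    exact cam_mono hcam _


theorem urel_of_uinv {u w : List A} (h : UInv L u w) : URel L u w :=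
  ⟨[], by rw [List.append_nil]; exact h⟩

theorem ncol_eq {u v : List A} (h : UInv L u v) :
    ncol L u v = ((sInf {c : ℕ | ColorAtMost L u c v} : ℕ) : WithBot ℕ) := by
  rw [ncol, if_pos (urel_of_uinv h)]

theorem upw_lt (X : List A) (P : List A) {m : ℕ} (h : m < X.length) :
    upw X P m = X[m] := wcat_lt X _ h

theorem upw_ge (X : List A) (P : List A) (m : ℕ) :
    upw X P (X.length + m) = P.getD (m % P.length) default := by
  unfold upw
  rw [wcat_ge]
  rfl

theorem sinf_stable {u v : List A} (hst : Stable L u v) (hinv : UInv L u v) :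
    sInf {c : ℕ | ColorAtMost L u c v} = sInf {c : ℕ | ExPow L c u v} := by
  have key : ∀ i, 0 < i →
      sInf {c : ℕ | ColorAtMost L u c v} = sInf {c : ℕ | ColorAtMost L u c (wrep v i)} := by
    intro i hi
    have h1 := hst i hi
    rw [ncol_eq hinv, ncol_eq (uinv_pow hinv i)] at h1
    exact_mod_cast h1
  have hsub : {c : ℕ | ColorAtMost L u c v} ⊆ {c : ℕ | ExPow L c u v} := by
    intro c hc
    exact ⟨1, one_pos, by rw [wrep_one]; exact hc⟩
  rcases Set.eq_empty_or_nonempty {c : ℕ | ExPow L c u v} with hT | hT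
  · have : {c : ℕ | ColorAtMost L u c v} = ∅ := Set.eq_empty_of_subset_empty (hT ▸ hsub)
    rw [this, hT]
  · apply le_antisymm
    · obtain ⟨j, hj, hcam⟩ := Nat.sInf_mem hT
      calc sInf {c : ℕ | ColorAtMost L u c v}
          = sInf {c : ℕ | ColorAtMost L u c (wrep v j)} := key j hj
        _ ≤ sInf {c : ℕ | ExPow L c u v} := Nat.sInf_le hcam
    · have hne : {c : ℕ | ColorAtMost L u c v}.Nonempty ∨
          {c : ℕ | ColorAtMost L u c v} = ∅ := by
        rcases Set.eq_empty_or_nonempty {c : ℕ | ColorAtMost L u c v} with h | h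
        · exact Or.inr h
        · exact Or.inl h
      -- pick j from sInf_mem of T
      obtain ⟨j, hj, hcam⟩ := Nat.sInf_mem hT
      have hSj : {c : ℕ | ColorAtMost L u c (wrep v j)}.Nonempty :=
        ⟨sInf {c : ℕ | ExPow L c u v}, hcam⟩
      have hmem : sInf {c : ℕ | ColorAtMost L u c (wrep v j)} ∈
          {c : ℕ | ExPow L c u v} := ⟨j, hj, Nat.sInf_mem hSj⟩
      calc sInf {c : ℕ | ExPow L c u v}
          ≤ sInf {c : ℕ | ColorAtMost L u c (wrep v j)} := Nat.sInf_le hmem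
        _ = sInf {c : ℕ | ColorAtMost L u c v} := (key j hj).symm


theorem getD_take {v : List A} {r j : ℕ} (h : j < r) (h2 : j < v.length) (d : A) :
    (v.take r).getD j d = v.getD j d := by
  rw [List.getD_eq_getElem _ _ (by simp; omega), List.getElem_take,
    List.getD_eq_getElem _ _ h2]

theorem getD_drop {v : List A} {r j : ℕ} (h : r + j < v.length) (d : A) :
    (v.drop r).getD j d = v.getD (r + j) d := by
  rw [List.getD_eq_getElem _ _ (by simp; omega), List.getElem_drop,
    List.getD_eq_getElem _ _ h]

theorem align {V Y u x : List A} (hn : Y.length = V.length) (hpos : 0 < V.length)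
    (hle : u.length ≤ x.length) (heq : upw u V = upw x Y) :
    x = (u ++ wrep V ((x.length - u.length) / V.length)) ++
        V.take ((x.length - u.length) % V.length) ∧
    Y = V.drop ((x.length - u.length) % V.length) ++
        V.take ((x.length - u.length) % V.length) := by
  have hnn : V.length = V.length := rfl
  set n := V.length with hnn
  set d := x.length - u.length with hd
  set q := d / n with hq
  set r := d % n with hrr
  have hrn : r < n := Nat.mod_lt _ hpos
  have hdqr : n * q + r = d := Nat.div_add_mod d n
  have hlen1 : (u ++ wrep V q).length = u.length + n * q := by
    rw [List.length_append, length_wrep, ← hnn, Nat.mul_comm]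
  have hlenL : ((u ++ wrep V q) ++ V.take r).length = u.length + n * q + r := by
    rw [List.length_append, hlen1, List.length_take]
    congr 1
    omega
  constructor
  · apply List.ext_getElem (by rw [hlenL]; omega)
    intro m hm hm2
    rw [← List.getD_eq_getElem x default hm, ← List.getD_eq_getElem _ default hm2]
    have hx : x.getD m default = upw x Y m := by
      rw [List.getD_eq_getElem x default hm, upw_lt x Y hm]
    rw [hx, ← heq]
    rcases lt_or_ge m u.length with h | h
    · rw [upw_lt u V h, List.getD_append _ _ _ _ (by rw [hlen1]; omega),
        List.getD_append _ _ _ _ h, List.getD_eq_getElem u default h]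
    · have hkd : m - u.length < d := by omega
      have hmk : m = u.length + (m - u.length) := by omega
      set k := m - u.length with hk
      rw [hmk, upw_ge]
      rcases lt_or_ge k (n * q) with h2 | h2
      · rw [List.getD_append _ _ _ _ (by rw [hlen1]; omega),
          List.getD_append_right _ _ _ _ (by omega : u.length ≤ u.length + k),
          show u.length + k - u.length = k by omega,
          getD_wrep V default (by rw [← hnn, Nat.mul_comm]; exact h2)]
      · have hmod : k % n = k - n * q := by
          conv_lhs => rw [show k = q * n + (k - n * q) by rw [Nat.mul_comm]; omega]
          rw [Nat.mul_comm q n, Nat.mul_add_mod, Nat.mod_eq_of_lt (by omega)]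
        rw [hmod, List.getD_append_right _ _ _ _ (by rw [hlen1]; omega),
          show u.length + k - (u ++ wrep V q).length = k - n * q by rw [hlen1]; omega,
          getD_take (by omega) (by omega) default]
  · apply List.ext_getElem (by simp; omega)
    intro k hk hk2
    have hkn : k < n := by omega
    rw [← List.getD_eq_getElem Y default hk, ← List.getD_eq_getElem _ default hk2]
    have hY : Y.getD k default = upw x Y (x.length + k) := by
      rw [upw_ge, hn, Nat.mod_eq_of_lt hkn]
    rw [hY, ← heq, show x.length + k = u.length + (d + k) by omega, upw_ge]
    have hdk : (d + k) % n = (r + k) % n := by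
      conv_lhs => rw [show d + k = n * q + (r + k) by omega]
      rw [Nat.mul_add_mod]
    rw [hdk]
    rcases lt_or_ge k (n - r) with h2 | h2
    · rw [Nat.mod_eq_of_lt (by omega),
        List.getD_append _ _ _ _ (by simp; omega),
        getD_drop (by omega) default]
    · have hmod : (r + k) % n = k - (n - r) := by
        conv_lhs => rw [show r + k = n + (k - (n - r)) by omega]
        rw [Nat.add_mod_left, Nat.mod_eq_of_lt (by omega)]
      rw [hmod, List.getD_append_right _ _ _ _ (by simp; omega),
        show k - (V.drop r).length = k - (n - r) by rw [List.length_drop],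
        getD_take (by omega) (by omega) default]

theorem main_le {u v x y : List A} (hv : v ≠ []) (hy : y ≠ [])
    (h1 : UReliable L u v) (h2 : UReliable L x y) (heq : upw u v = upw x y)
    (hle : u.length ≤ x.length) : ncol L u v = ncol L x y := by
  obtain ⟨hinv1, hst1⟩ := h1
  obtain ⟨hinv2, hst2⟩ := h2
  have hvpos : 0 < v.length := List.length_pos_iff.mpr hv
  have hypos : 0 < y.length := List.length_pos_iff.mpr hy
  set V := wrep v y.length with hV
  set Y := wrep y v.length with hYdef
  have hVlen : V.length = y.length * v.length := length_wrep v y.length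
  have hYlen : Y.length = v.length * y.length := length_wrep y v.length
  have hVpos : 0 < V.length := by rw [hVlen]; positivity
  have hnYV : Y.length = V.length := by rw [hYlen, hVlen, Nat.mul_comm]
  have heq2 : upw u V = upw x Y := by
    unfold upw
    rw [hV, hYdef, wpow_wrep hypos hv, wpow_wrep hvpos hy]
    exact heq
  obtain ⟨hx, hyy⟩ := align hnYV hVpos hle heq2
  set q := (x.length - u.length) / V.length with hq
  set r := (x.length - u.length) % V.length with hr
  set s := V.take r with hs
  set t := V.drop r with ht
  have hst : s ++ t = V := List.take_append_drop r V
  have hinvV : UInv L u V := uinv_pow hinv1 y.length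
  have hsimU : simL L u (u ++ wrep V q) := uinv_pow hinvV q
  have hinvV2 : UInv L (u ++ wrep V q) V := by
    have h3 : simL L u (u ++ wrep V (q + 1)) := uinv_pow hinvV (q + 1)
    have h4 : u ++ wrep V (q + 1) = (u ++ wrep V q) ++ V := by
      rw [wrep_add V q 1, wrep_one, List.append_assoc]
    rw [h4] at h3
    exact simL_trans (simL_symm hsimU) h3
  have hnat : sInf {c : ℕ | ExPow L c u v} = sInf {c : ℕ | ExPow L c x y} := by
    congr 1
    ext c
    simp only [Set.mem_setOf_eq]
    have e1 : ExPow L c u v ↔ ExPow L c u V := (expow_powers hypos).symm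
    have e2 : ExPow L c u V ↔ ExPow L c (u ++ wrep V q) V :=
      ⟨expow_congr hsimU c V, expow_congr (simL_symm hsimU) c V⟩
    have e2b : ExPow L c (u ++ wrep V q) V ↔ ExPow L c (u ++ wrep V q) (s ++ t) := by
      rw [hst]
    have e3 : ExPow L c (u ++ wrep V q) (s ++ t) ↔
        ExPow L c ((u ++ wrep V q) ++ s) (t ++ s) :=
      expow_rot_iff (by rw [hst]; exact hinvV2)
    have e4 : ExPow L c ((u ++ wrep V q) ++ s) (t ++ s) ↔ ExPow L c x Y := by
      rw [hx, hyy]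
    have e5 : ExPow L c x Y ↔ ExPow L c x y := expow_powers hvpos
    exact (((((e1.trans e2).trans e2b).trans e3).trans e4).trans e5)
  rw [ncol_eq hinv1, ncol_eq hinv2, sinf_stable hst1 hinv1, sinf_stable hst2 hinv2, hnat]

theorem reliable_normalizations_agree_aux {u v x y : List A} (hv : v ≠ []) (hy : y ≠ [])
    (h1 : UReliable L u v) (h2 : UReliable L x y) (heq : upw u v = upw x y) :
    ncol L u v = ncol L x y := by
  rcases le_total u.length x.length with h | h
  · exact main_le hv hy h1 h2 heq h
  · exact (main_le hy hv h2 h1 heq.symm h).symm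

end Aux

/-- reliable normalizations of the same ultimately periodic word agree
on colors. -/
theorem reliable_normalizations_agree {A : Type} [Inhabited A] (L : Set (ℕ → A))
    (hreg : OmegaRegular L) (u v x y : List A) (hv : v ≠ []) (hy : y ≠ [])
    (h1 : UReliable L u v) (h2 : UReliable L x y) (heq : upw u v = upw x y) :
    ncol L u v = ncol L x y := by
  exact reliable_normalizations_agree_aux hv hy h1 h2 heq
end

section
/- The natural color of an ultimately periodic infinite word equals the color of any of its reliable normalizations: if v is u-reliable then the natural color of u·v^ω (the minimum of col_{u′}(v′) over all decompositions u·v^ω = u′(v′)^ω with v′ u′-invariant) equals col_u(v). -/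
open scoped Classical

namespace NC

set_option linter.unusedSectionVars false
variable {A : Type} [Inhabited A]

lemma wcat_lt (u : List A) (w : ℕ → A) {n : ℕ} (h : n < u.length) :
    wcat u w n = u[n] := by simp [wcat, h]

lemma wcat_ge (u : List A) (w : ℕ → A) {n : ℕ} (h : u.length ≤ n) :
    wcat u w n = w (n - u.length) := by
  simp [wcat, Nat.not_lt.mpr h]

lemma wcat_append (a b : List A) (w : ℕ → A) :
    wcat (a ++ b) w = wcat a (wcat b w) := by
  funext n
  by_cases h1 : n < a.length
  · rw [wcat_lt _ _ (by simp; omega), wcat_lt _ _ h1, List.getElem_append_left h1]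
  · push_neg at h1
    by_cases h2 : n < a.length + b.length
    · rw [wcat_lt _ _ (by simp; omega), wcat_ge _ _ h1, wcat_lt _ _ (by omega),
        List.getElem_append_right h1]
    · push_neg at h2
      rw [wcat_ge _ _ (by simp; omega), wcat_ge _ _ h1, wcat_ge _ _ (by omega)]
      simp; congr 1; omega

@[simp] lemma wrep_zero (v : List A) : wrep v 0 = [] := rfl

lemma wrep_succ (v : List A) (i : ℕ) : wrep v (i + 1) = v ++ wrep v i := by
  simp [wrep, List.replicate_succ]

@[simp] lemma length_wrep (v : List A) (i : ℕ) : (wrep v i).length = i * v.length := by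
  induction i with
  | zero => simp
  | succ i ih => rw [wrep_succ]; simp [ih]; ring

lemma wrep_add (v : List A) (a b : ℕ) : wrep v (a + b) = wrep v a ++ wrep v b := by
  induction a with
  | zero => simp
  | succ a ih =>
    rw [show a + 1 + b = (a + b) + 1 by omega, wrep_succ, ih, wrep_succ]
    simp

lemma wrep_one (v : List A) : wrep v 1 = v := by rw [wrep_succ]; simp

lemma getElem_wrep (v : List A) (i : ℕ) {t : ℕ} (h : t < (wrep v i).length) :
    (wrep v i)[t] = v[t % v.length]'(by
      simp only [length_wrep] at h
      have hv : 0 < v.length := by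
        rcases Nat.eq_zero_or_pos v.length with h0 | h0
        · rw [h0, Nat.mul_zero] at h; omega
        · exact h0
      exact Nat.mod_lt _ hv) := by
  induction i generalizing t with
  | zero => exact absurd h (by simp)
  | succ i ih =>
    simp only [wrep_succ] at h ⊢
    by_cases h1 : t < v.length
    · rw [List.getElem_append_left h1]
      congr 1
      exact (Nat.mod_eq_of_lt h1).symm
    · push_neg at h1
      rw [List.getElem_append_right h1, ih]
      congr 1
      conv_rhs => rw [show t = (t - v.length) + 1 * v.length by omega]
      rw [Nat.add_mul_mod_self_right]

lemma wpow_apply (v : List A) (n : ℕ) : wpow v n = v.getD (n % v.length) default := rfl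

lemma wpow_apply_lt (v : List A) {n : ℕ} (h : n < v.length) : wpow v n = v[n] := by
  rw [wpow_apply, Nat.mod_eq_of_lt h, List.getD_eq_getElem]

lemma wpow_rot (x D : List A) : wcat x (wpow (D ++ x)) = wpow (x ++ D) := by
  funext m
  by_cases hm : m < x.length
  · rw [wcat_lt _ _ hm, wpow_apply_lt _ (by simp; omega), List.getElem_append_left hm]
  · push_neg at hm
    rw [wcat_ge _ _ hm, wpow_apply, wpow_apply]
    by_cases hL : x.length + D.length = 0
    · have hx : x = [] := by
        have := List.length_eq_zero_iff.mp (by omega : x.length = 0); exact this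
      have hD : D = [] := by
        have := List.length_eq_zero_iff.mp (by omega : D.length = 0); exact this
      simp [hx, hD]
    · have hlen : (D ++ x).length = x.length + D.length := by simp; omega
      have hlen2 : (x ++ D).length = x.length + D.length := by simp
      rw [hlen, hlen2]
      set len := x.length + D.length with hlendef
      have hlp : 0 < len := by omega
      set t := m - x.length with ht
      have hmt : m = t + x.length := by omega
      have hmod : m % len = (t % len + x.length) % len := by
        conv_lhs => rw [hmt]
        exact Nat.ModEq.add_right _ (Nat.mod_modEq t len).symm
      rw [hmod]
      set s := t % len with hs
      have hslt : s < len := Nat.mod_lt _ hlp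
      by_cases hsD : s < D.length
      · rw [List.getD_eq_getElem _ _ (by simp; omega), List.getElem_append_left hsD,
          Nat.mod_eq_of_lt (by omega),
          List.getD_eq_getElem _ _ (by simp; omega),
          List.getElem_append_right (by omega)]
        congr 1; omega
      · push_neg at hsD
        rw [List.getD_eq_getElem _ _ (by simp; omega), List.getElem_append_right hsD]
        have : (s + x.length) % len = s - D.length := by
          have : s + x.length = len + (s - D.length) := by omega
          rw [this, Nat.add_mod_left, Nat.mod_eq_of_lt (by omega)]
        rw [this, List.getD_eq_getElem _ _ (by simp; omega),
          List.getElem_append_left (by omega)]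

end NC

namespace NC
set_option linter.unusedSectionVars false
variable {A : Type} [Inhabited A] {L : Set (ℕ → A)}

lemma simL_refl (x : List A) : simL L x x := fun _ => Iff.rfl
lemma simL_symm {x y : List A} (h : simL L x y) : simL L y x := fun w => (h w).symm
lemma simL_trans {x y z : List A} (h1 : simL L x y) (h2 : simL L y z) : simL L x z :=
  fun w => (h1 w).trans (h2 w)
lemma simL_append_right {x y : List A} (h : simL L x y) (t : List A) :
    simL L (x ++ t) (y ++ t) := fun w => by
  rw [wcat_append, wcat_append]; exact h _

lemma UInv_nil (u : List A) : UInv L u [] := by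
  unfold UInv; rw [List.append_nil]; exact simL_refl u

lemma UInv_append {u H K : List A} (h1 : UInv L u H) (h2 : UInv L u K) :
    UInv L u (H ++ K) := by
  intro s
  have e1 : wcat (u ++ (H ++ K)) s = wcat (u ++ H) (wcat K s) := by
    rw [← List.append_assoc, wcat_append]
  have e2 : wcat (u ++ K) s = wcat u (wcat K s) := wcat_append u K s
  have a1 : wcat u s ∈ L ↔ wcat u (wcat K s) ∈ L := by rw [← e2]; exact h2 s
  rw [e1]
  exact a1.trans (h1 (wcat K s))

lemma UInv_wrep {u B : List A} (h : UInv L u B) (i : ℕ) : UInv L u (wrep B i) := by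
  induction i with
  | zero => exact UInv_nil u
  | succ i ih => rw [wrep_succ]; exact UInv_append h ih

lemma UInv_congr {u u' X : List A} (h : simL L u u') (hx : UInv L u X) : UInv L u' X := by
  intro s
  exact ((h s).symm.trans (hx s)).trans (simL_append_right h X s)

lemma URel_of_UInv {u v : List A} (h : UInv L u v) : URel L u v :=
  ⟨[], by rwa [List.append_nil]⟩

lemma upw_mem_congr {u u' : List A} (h : simL L u u') (B : List A) :
    (upw u B ∈ L ↔ upw u' B ∈ L) := h (wpow B)

lemma CAM_iff (L : Set (ℕ → A)) (u : List A) (c : ℕ) (v : List A) :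
    ColorAtMost L u c v ↔ ∀ z : List A, UInv L u (v ++ z) →
      ((upw u (v ++ z) ∈ L ↔ Even c) ∨
        ∃ i : ℕ, 0 < i ∧ ∃ c' : Fin c, ColorAtMost L u (c' : ℕ) (wrep (v ++ z) i)) := by
  rw [ColorAtMost]

lemma CAM_mono_prefix {u S : List A} {c : ℕ} (h : ColorAtMost L u c S) (d : List A) :
    ColorAtMost L u c (S ++ d) := by
  rw [CAM_iff] at h ⊢
  intro z hz
  have e : S ++ (d ++ z) = (S ++ d) ++ z := (List.append_assoc ..).symm
  have h2 := h (d ++ z) (by rw [e]; exact hz)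
  rwa [e] at h2

lemma CAM_congr_base {u u' : List A} (h : simL L u u') :
    ∀ c X, ColorAtMost L u c X → ColorAtMost L u' c X := by
  intro c
  induction c using Nat.strong_induction_on with
  | _ c IH =>
    intro X hX
    rw [CAM_iff] at hX ⊢
    intro z hz
    have hz' : UInv L u (X ++ z) := UInv_congr (simL_symm h) hz
    rcases hX z hz' with h1 | ⟨i, hi, c', hc⟩
    · left; rwa [upw_mem_congr h (X ++ z)] at h1
    · right; exact ⟨i, hi, c', IH c' c'.isLt _ hc⟩


def Bad (L : Set (ℕ → A)) (u : List A) (c : ℕ) (D : List A) : Prop :=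
  UInv L u D ∧ ¬(upw u D ∈ L ↔ Even c) ∧
    ∀ i : ℕ, 0 < i → ∀ c' : ℕ, c' < c → ¬ ColorAtMost L u c' (wrep D i)

lemma exists_bad_of_not_CAM {u T : List A} {c : ℕ} (h : ¬ ColorAtMost L u c T) :
    ∃ z, Bad L u c (T ++ z) := by
  rw [CAM_iff] at h
  push_neg at h
  obtain ⟨z, hz, h1, h2⟩ := h
  refine ⟨z, hz, by tauto, ?_⟩
  intro i hi c' hc' hcam
  exact (h2 i hi ⟨c', hc'⟩) hcam

lemma bad_refutes {u W : List A} {c : ℕ} (hb : Bad L u c W)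
    (hc : ColorAtMost L u c W) : False := by
  rw [CAM_iff] at hc
  have h := hc [] (by rw [List.append_nil]; exact hb.1)
  rw [List.append_nil] at h
  rcases h with h1 | ⟨i, hi, c', h2⟩
  · exact hb.2.1 h1
  · exact hb.2.2 i hi c' c'.isLt h2

lemma conj_pow (x D : List A) (i : ℕ) :
    D ++ wrep (x ++ D) i = wrep (D ++ x) i ++ D := by
  induction i with
  | zero => simp
  | succ i ih =>
    rw [wrep_succ, wrep_succ]
    calc D ++ ((x ++ D) ++ wrep (x ++ D) i)
        = (D ++ x) ++ (D ++ wrep (x ++ D) i) := by simp [List.append_assoc]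
      _ = (D ++ x) ++ (wrep (D ++ x) i ++ D) := by rw [ih]
      _ = (D ++ x) ++ wrep (D ++ x) i ++ D := by simp [List.append_assoc]

lemma upw_conj (u0 x Db : List A) :
    upw (u0 ++ x) (Db ++ x) = wcat u0 (wpow (x ++ Db)) := by
  unfold upw
  rw [wcat_append, wpow_rot]

lemma bad_conj : ∀ c : ℕ, ∀ u u0 x Db : List A, simL L u0 u →
    Bad L u c (x ++ Db) → Bad L (u0 ++ x) c (Db ++ x) := by
  intro c
  induction c using Nat.strong_induction_on with
  | _ c IH =>
    intro u u0 x Db hsim hbad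
    obtain ⟨hinv, hpar, hesc⟩ := hbad
    have hinv' : UInv L (u0 ++ x) (Db ++ x) := by
      unfold UInv
      have e : (u0 ++ x) ++ (Db ++ x) = u0 ++ ((x ++ Db) ++ x) := by
        simp [List.append_assoc]
      rw [e]
      have s0 : simL L (u0 ++ x) (u ++ x) := simL_append_right hsim x
      have s2' : simL L (u ++ x) ((u ++ (x ++ Db)) ++ x) := simL_append_right hinv x
      have e2 : (u ++ (x ++ Db)) ++ x = u ++ ((x ++ Db) ++ x) := by
        simp [List.append_assoc]
      rw [e2] at s2'
      have s3 : simL L (u ++ ((x ++ Db) ++ x)) (u0 ++ ((x ++ Db) ++ x)) :=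
        simL_append_right (simL_symm hsim) _
      exact simL_trans s0 (simL_trans s2' s3)
    refine ⟨hinv', ?_, ?_⟩
    · rw [upw_conj]
      have hm : wcat u0 (wpow (x ++ Db)) ∈ L ↔ upw u (x ++ Db) ∈ L :=
        hsim (wpow (x ++ Db))
      intro hiff
      exact hpar (hm.symm.trans hiff)
    · intro i hi c' hc' hcam
      have hnot : ¬ ColorAtMost L u c' (wrep (x ++ Db) (i + 1)) :=
        hesc (i + 1) (by omega) c' hc'
      obtain ⟨z2, hbadE⟩ := exists_bad_of_not_CAM hnot
      have eE : wrep (x ++ Db) (i + 1) ++ z2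
          = x ++ (Db ++ wrep (x ++ Db) i ++ z2) := by
        rw [wrep_succ]; simp [List.append_assoc]
      rw [eE] at hbadE
      have hbadE' := IH c' hc' u u0 x (Db ++ wrep (x ++ Db) i ++ z2) hsim hbadE
      have eE2 : (Db ++ wrep (x ++ Db) i ++ z2) ++ x
          = wrep (Db ++ x) i ++ (Db ++ z2 ++ x) := by
        calc (Db ++ wrep (x ++ Db) i ++ z2) ++ x
            = (Db ++ wrep (x ++ Db) i) ++ (z2 ++ x) := by simp [List.append_assoc]
          _ = (wrep (Db ++ x) i ++ Db) ++ (z2 ++ x) := by rw [conj_pow]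
          _ = wrep (Db ++ x) i ++ (Db ++ z2 ++ x) := by simp [List.append_assoc]
      rw [eE2] at hbadE'
      rw [CAM_iff] at hcam
      have h := hcam (Db ++ z2 ++ x) hbadE'.1
      rcases h with hp | ⟨i2, hi2, c'', hcc⟩
      · exact hbadE'.2.1 hp
      · exact hbadE'.2.2 i2 hi2 c'' c''.isLt hcc


/-! ### Automaton machinery -/

section Automaton

variable {Q : Type}

def dstar (δ : Q → A → Q) (q : Q) (w : List A) : Q := w.foldl δ q

lemma dstar_append (δ : Q → A → Q) (q : Q) (w1 w2 : List A) :
    dstar δ q (w1 ++ w2) = dstar δ (dstar δ q w1) w2 := List.foldl_append ..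

def pl (w : ℕ → A) (n : ℕ) : List A := (List.range n).map w

@[simp] lemma pl_length (w : ℕ → A) (n : ℕ) : (pl w n).length = n := by simp [pl]

lemma pl_getElem (w : ℕ → A) (n : ℕ) {j : ℕ} (h : j < (pl w n).length) :
    (pl w n)[j] = w j := by simp [pl]

lemma pl_succ (w : ℕ → A) (n : ℕ) : pl w (n + 1) = pl w n ++ [w n] := by
  simp [pl, List.range_succ]

lemma runOf_eq (δ : Q → A → Q) (q0 : Q) (w : ℕ → A) (n : ℕ) :
    runOf δ q0 w n = dstar δ q0 (pl w n) := by
  induction n with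
  | zero => rfl
  | succ n ih =>
    rw [show runOf δ q0 w (n+1) = δ (runOf δ q0 w n) (w n) from rfl, ih, pl_succ,
      dstar_append]
    rfl

lemma pl_wcat (p : List A) (s : ℕ → A) : pl (wcat p s) p.length = p := by
  apply List.ext_getElem (by simp)
  intro j h1 h2
  rw [pl_getElem, wcat_lt _ _ h2]

lemma runOf_shift (δ : Q → A → Q) (q0 : Q) (p : List A) (s : ℕ → A) (m : ℕ) :
    runOf δ q0 (wcat p s) (p.length + m) = runOf δ (dstar δ q0 p) s m := by
  induction m with
  | zero =>
    rw [Nat.add_zero, runOf_eq, pl_wcat]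
    rfl
  | succ m ih =>
    rw [show p.length + (m+1) = (p.length + m) + 1 by omega,
      show runOf δ q0 (wcat p s) ((p.length + m)+1)
        = δ (runOf δ q0 (wcat p s) (p.length + m)) (wcat p s (p.length + m)) from rfl,
      ih, wcat_ge _ _ (by omega), Nat.add_sub_cancel_left]
    rfl

def VS (δ : Q → A → Q) (q : Q) (w : List A) : Set Q :=
  {p | ∃ m, m < w.length ∧ dstar δ q (w.take m) = p}

lemma VS_mono_prefix (δ : Q → A → Q) (q : Q) (w t : List A) :
    VS δ q w ⊆ VS δ q (w ++ t) := by
  rintro p ⟨m, hm, rfl⟩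
  exact ⟨m, by simp; omega, by rw [List.take_append_of_le_length (by omega)]⟩

lemma VS_append_right (δ : Q → A → Q) (q : Q) (w1 w2 : List A) :
    VS δ (dstar δ q w1) w2 ⊆ VS δ q (w1 ++ w2) := by
  rintro p ⟨m, hm, rfl⟩
  refine ⟨w1.length + m, by simp; omega, ?_⟩
  rw [List.take_append, List.take_of_length_le (by omega),
    show w1.length + m - w1.length = m by omega, dstar_append]

lemma VS_nonempty (δ : Q → A → Q) (q : Q) {w : List A} (h : w ≠ []) :
    q ∈ VS δ q w :=
  ⟨0, by simp [List.length_pos_iff.mpr h], rfl⟩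

lemma dstar_wrep (δ : Q → A → Q) (q : Q) (B : List A) (k : ℕ) :
    dstar δ q (wrep B k) = (fun p => dstar δ p B)^[k] q := by
  induction k generalizing q with
  | zero => rfl
  | succ k ih =>
    rw [wrep_succ, dstar_append, Function.iterate_succ_apply, ih]

lemma pl_wpow_take (B : List A) (k : ℕ) {m : ℕ} (hm : m ≤ k * B.length) :
    pl (wpow B) m = (wrep B k).take m := by
  apply List.ext_getElem (by simp; omega)
  intro j h1 h2
  have hj : j < m := by simpa using h1
  have hjk : j < (wrep B k).length := by simp; omega
  have hB : 0 < B.length := by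
    rcases Nat.eq_zero_or_pos B.length with h0 | h0
    · rw [h0, Nat.mul_zero] at hm; omega
    · exact h0
  rw [pl_getElem, List.getElem_take, getElem_wrep _ _ hjk, wpow_apply,
    List.getD_eq_getElem _ _ (Nat.mod_lt _ hB)]

lemma wpow_wcat_wrep {B : List A} (hB : B ≠ []) (k : ℕ) :
    wcat (wrep B k) (wpow B) = wpow B := by
  have hB' : 0 < B.length := List.length_pos_iff.mpr hB
  funext n
  by_cases h : n < (wrep B k).length
  · rw [wcat_lt _ _ h, getElem_wrep _ _ h, wpow_apply,
      List.getD_eq_getElem _ _ (Nat.mod_lt _ hB')]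
  · push_neg at h
    rw [wcat_ge _ _ h, wpow_apply, wpow_apply]
    congr 1
    simp only [length_wrep] at h ⊢
    conv_rhs => rw [show n = (n - k * B.length) + k * B.length by omega]
    rw [Nat.add_mul_mod_self_right]

lemma runOf_wpow_shift (δ : Q → A → Q) (t : Q) {B : List A} (hB : B ≠ []) (k j : ℕ) :
    runOf δ t (wpow B) (k * B.length + j)
      = runOf δ ((fun p => dstar δ p B)^[k] t) (wpow B) j := by
  conv_lhs => rw [← wpow_wcat_wrep hB k]
  rw [show k * B.length = (wrep B k).length by simp, runOf_shift, dstar_wrep]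

lemma infSet_periodic (r : ℕ → Q) (M P : ℕ) (hP : 0 < P)
    (h : ∀ m, M ≤ m → r (m + P) = r m) :
    infSet r = {q | ∃ j, j < P ∧ r (M + j) = q} := by
  have key : ∀ t, r (M + t) = r (M + t % P) := by
    intro t
    induction t using Nat.strong_induction_on with
    | _ t IH =>
      by_cases ht : t < P
      · rw [Nat.mod_eq_of_lt ht]
      · push_neg at ht
        have e1 : M + t = (M + (t - P)) + P := by omega
        rw [e1, h _ (by omega), IH (t - P) (by omega)]
        congr 2
        conv_rhs => rw [show t = (t - P) + P by omega]
        rw [Nat.add_mod_right]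
  ext q
  constructor
  · intro hq
    obtain ⟨m, hm, hr⟩ := hq M
    refine ⟨(m - M) % P, Nat.mod_lt _ hP, ?_⟩
    rw [← key (m - M), show M + (m - M) = m by omega, hr]
  · rintro ⟨j, hj, rfl⟩
    intro n
    have h2 : ∀ k, r (M + j + k * P) = r (M + j) := by
      intro k
      induction k with
      | zero => simp
      | succ k ih =>
        rw [show M + j + (k+1)*P = (M + j + k*P) + P by ring, h _ (by omega), ih]
    have h3 : n ≤ n * P := Nat.le_mul_of_pos_right n hP
    exact ⟨M + j + n * P, by omega, h2 n⟩

noncomputable def idemM (Q : Type) [Fintype Q] : ℕ := (Fintype.card (Q → Q)).factorial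

lemma idemM_pos (Q : Type) [Fintype Q] : 0 < idemM Q := Nat.factorial_pos _

lemma idemM_idem {Q : Type} [Fintype Q] (f : Q → Q) :
    f^[idemM Q] ∘ f^[idemM Q] = f^[idemM Q] := by
  classical
  set N := Fintype.card (Q → Q) with hN
  obtain ⟨x, y, hxy, hfe⟩ :=
    Fintype.exists_ne_map_eq_of_card_lt (fun i : Fin (N + 1) => f^[(i : ℕ)])
      (by simp [hN])
  obtain ⟨a, b, hab, hbN, hfab⟩ : ∃ a b : ℕ, a < b ∧ b ≤ N ∧ f^[a] = f^[b] := by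
    rcases lt_or_gt_of_ne (show (x : ℕ) ≠ (y : ℕ) from fun h => hxy (Fin.ext h)) with h | h
    · exact ⟨x, y, h, by omega, hfe⟩
    · exact ⟨y, x, h, by omega, hfe.symm⟩
  set p := b - a with hp
  have hp0 : 0 < p := by omega
  have key : ∀ m, a ≤ m → f^[m + p] = f^[m] := by
    intro m hm
    have e : m + p = (m - a) + b := by omega
    rw [e, Function.iterate_add, ← hfab, ← Function.iterate_add,
      show m - a + a = m by omega]
  have key2 : ∀ k m, a ≤ m → f^[m + k * p] = f^[m] := by
    intro k
    induction k with
    | zero => intro m _; simp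
    | succ k ih =>
      intro m hm
      rw [show m + (k+1)*p = (m + k*p) + p by ring, key _ (by omega), ih m hm]
  have hdvd : p ∣ idemM Q := Nat.dvd_factorial hp0 (by omega)
  obtain ⟨t, ht⟩ := hdvd
  have haM : a ≤ idemM Q := le_trans (by omega) (Nat.self_le_factorial N)
  rw [← Function.iterate_add]
  calc f^[idemM Q + idemM Q] = f^[idemM Q + t * p] := by rw [ht]; ring_nf
    _ = f^[idemM Q] := key2 t _ haM

lemma infSet_run [Fintype Q] (δ : Q → A → Q) (q0 : Q) (p : List A) {B : List A}
    (hB : B ≠ []) :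
    infSet (runOf δ q0 (wcat p (wpow B)))
      = VS δ (dstar δ (dstar δ q0 p) (wrep B (idemM Q))) (wrep B (idemM Q)) := by
  classical
  have hBl : 0 < B.length := List.length_pos_iff.mpr hB
  have hMpos := idemM_pos Q
  set M := idemM Q with hM
  set g := fun q => dstar δ q B with hg
  set t := dstar δ q0 p with htdef
  set r := runOf δ q0 (wcat p (wpow B)) with hr
  have hshift : ∀ m, r (p.length + m) = runOf δ t (wpow B) m := fun m =>
    runOf_shift δ q0 p (wpow B) m
  have hper : ∀ m, p.length + M * B.length ≤ m → r (m + M * B.length) = r m := by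
    intro m hm
    set s := m - p.length with hs
    have hm1 : m = p.length + s := by omega
    have hsM : M * B.length ≤ s := by omega
    set j := s - M * B.length with hj
    have hsj : s = M * B.length + j := by omega
    have hidem : g^[M + M] t = g^[M] t := by
      rw [Function.iterate_add]
      exact congrFun (idemM_idem g) t
    rw [hm1, show p.length + s + M * B.length = p.length + (s + M * B.length) by omega,
      hshift, hshift, hsj,
      show M * B.length + j + M * B.length = (M + M) * B.length + j by ring,
      runOf_wpow_shift δ t hB, runOf_wpow_shift δ t hB, hidem]
  rw [infSet_periodic r (p.length + M * B.length) (M * B.length)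
    (Nat.mul_pos hMpos hBl) hper]
  have hval : ∀ j, j < M * B.length →
      r (p.length + M * B.length + j)
        = dstar δ (dstar δ t (wrep B M)) ((wrep B M).take j) := by
    intro j hj
    rw [show p.length + M * B.length + j = p.length + (M * B.length + j) by omega,
      hshift, runOf_wpow_shift δ t hB, runOf_eq, pl_wpow_take _ M (le_of_lt hj),
      dstar_wrep]
  ext q
  simp only [Set.mem_setOf_eq, VS]
  constructor
  · rintro ⟨j, hj, hq⟩
    exact ⟨j, by simpa using hj, by rw [← hval j hj]; exact hq⟩
  · rintro ⟨j, hj, hq⟩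
    have hj' : j < M * B.length := by simpa using hj
    exact ⟨j, hj', by rw [hval j hj']; exact hq⟩

end Automaton

/-! ### Boundedness of natural colors -/

section Bound

variable {Q : Type} [Fintype Q]

def Tst (δ : Q → A → Q) (q0 : Q) (u0 H B : List A) : Set Q :=
  VS δ (dstar δ (dstar δ q0 (u0 ++ H)) (wrep B (idemM Q))) (wrep B (idemM Q))

def sig (δ : Q → A → Q) (q0 : Q) (α : Set (Set Q)) (u0 B : List A) : Prop :=
  Tst δ q0 u0 [] B ∈ α

lemma mem_upw_iff (δ : Q → A → Q) (q0 : Q) (α : Set (Set Q))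
    (hspec : ∀ w : ℕ → A, w ∈ L ↔ infSet (runOf δ q0 w) ∈ α)
    (u0 : List A) {B : List A} (hB : B ≠ []) (H : List A) (hH : UInv L u0 H) :
    (upw u0 B ∈ L ↔ Tst δ q0 u0 H B ∈ α) := by
  have h1 : wcat (u0 ++ H) (wpow B) ∈ L ↔ Tst δ q0 u0 H B ∈ α := by
    rw [hspec, infSet_run δ q0 (u0 ++ H) hB]
    exact Iff.rfl
  exact (hH (wpow B)).trans h1

lemma status_Tst (δ : Q → A → Q) (q0 : Q) (α : Set (Set Q))
    (hspec : ∀ w : ℕ → A, w ∈ L ↔ infSet (runOf δ q0 w) ∈ α)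
    (u0 : List A) {B : List A} (hB : B ≠ []) {H : List A} (hH : UInv L u0 H) :
    (Tst δ q0 u0 H B ∈ α ↔ sig δ q0 α u0 B) :=
  (mem_upw_iff δ q0 α hspec u0 hB H hH).symm.trans
    (mem_upw_iff δ q0 α hspec u0 hB [] (UInv_nil u0))

lemma Tst_incl (δ : Q → A → Q) (q0 : Q) (u0 : List A) {B B' z : List A}
    (hB' : B' = wrep B (2 * idemM Q) ++ z) (H : List A) :
    Tst δ q0 u0 (H ++ wrep B' (idemM Q)) B ⊆ Tst δ q0 u0 H B' := by
  have hMpos := idemM_pos Q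
  set M := idemM Q with hM
  set aR := dstar δ (dstar δ q0 (u0 ++ H)) (wrep B' M) with haR
  have e0 : dstar δ q0 (u0 ++ (H ++ wrep B' M)) = aR := by
    rw [← List.append_assoc, dstar_append]
  unfold Tst
  rw [e0]
  have e1 : wrep B M ++ wrep B M = wrep B (2*M) := by
    rw [← wrep_add]
    congr 1
    omega
  have e2 : wrep B' M = B' ++ wrep B' (M - 1) := by
    conv_lhs => rw [show M = (M-1) + 1 by omega, wrep_succ]
  calc VS δ (dstar δ aR (wrep B M)) (wrep B M)
      ⊆ VS δ aR (wrep B M ++ wrep B M) := VS_append_right δ aR _ _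
    _ = VS δ aR (wrep B (2*M)) := by rw [e1]
    _ ⊆ VS δ aR (wrep B (2*M) ++ z) := VS_mono_prefix δ aR _ _
    _ = VS δ aR B' := by rw [hB']
    _ ⊆ VS δ aR (B' ++ wrep B' (M-1)) := VS_mono_prefix δ aR _ _
    _ = VS δ aR (wrep B' M) := by rw [← e2]

def NestP (δ : Q → A → Q) (q0 : Q) (α : Set (Set Q)) (L : Set (ℕ → A))
    (u0 : List A) : ℕ → List A → Prop
  | 0, _ => True
  | (m+1), B => ∃ B' z, B' = wrep B (2 * idemM Q) ++ z ∧ UInv L u0 B' ∧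
      ¬(sig δ q0 α u0 B' ↔ sig δ q0 α u0 B) ∧ NestP δ q0 α L u0 m B'

lemma loop_ext_ne_nil {B : List A} (hB : B ≠ []) (z : List A) :
    wrep B (2 * idemM Q) ++ z ≠ [] := by
  intro hcon
  have h1 := congrArg List.length hcon
  have hMpos := idemM_pos Q
  have hBl : 0 < B.length := List.length_pos_iff.mpr hB
  simp only [List.length_append, length_wrep, List.length_nil] at h1
  have : 0 < 2 * idemM Q * B.length := by positivity
  omega

lemma nest_bound (δ : Q → A → Q) (q0 : Q) (α : Set (Set Q))
    (hspec : ∀ w : ℕ → A, w ∈ L ↔ infSet (runOf δ q0 w) ∈ α) (u0 : List A) :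
    ∀ (m : ℕ) (B : List A), UInv L u0 B → B ≠ [] → NestP δ q0 α L u0 m B →
    ∃ H, UInv L u0 H ∧ m + (Tst δ q0 u0 H B).ncard ≤ Fintype.card Q := by
  intro m
  induction m with
  | zero =>
    intro B hB hBne _
    refine ⟨[], UInv_nil u0, ?_⟩
    have h1 := Set.ncard_le_ncard (Set.subset_univ (Tst δ q0 u0 [] B)) Set.finite_univ
    rw [Set.ncard_univ, Nat.card_eq_fintype_card] at h1
    omega
  | succ m IH =>
    intro B hB hBne hN
    obtain ⟨B', z, hB', hInv', hσ, hN'⟩ := hN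
    have hBne' : B' ≠ [] := hB' ▸ loop_ext_ne_nil hBne z
    obtain ⟨H', hH', hle⟩ := IH B' hInv' hBne' hN'
    have hHinv : UInv L u0 (H' ++ wrep B' (idemM Q)) :=
      UInv_append hH' (UInv_wrep hInv' _)
    refine ⟨H' ++ wrep B' (idemM Q), hHinv, ?_⟩
    have hsub : Tst δ q0 u0 (H' ++ wrep B' (idemM Q)) B ⊆ Tst δ q0 u0 H' B' :=
      Tst_incl δ q0 u0 hB' H'
    have hne : Tst δ q0 u0 (H' ++ wrep B' (idemM Q)) B ≠ Tst δ q0 u0 H' B' := by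
      intro he
      apply hσ
      have s1 : Tst δ q0 u0 (H' ++ wrep B' (idemM Q)) B ∈ α ↔ sig δ q0 α u0 B :=
        status_Tst δ q0 α hspec u0 hBne hHinv
      have s2 : Tst δ q0 u0 H' B' ∈ α ↔ sig δ q0 α u0 B' :=
        status_Tst δ q0 α hspec u0 hBne' hH'
      rw [he] at s1
      exact s2.symm.trans s1
    have hlt : (Tst δ q0 u0 (H' ++ wrep B' (idemM Q)) B).ncard
        < (Tst δ q0 u0 H' B').ncard :=
      Set.ncard_lt_ncard (ssubset_of_subset_of_ne hsub hne) (Set.toFinite _)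
    omega

noncomputable def rank (δ : Q → A → Q) (q0 : Q) (α : Set (Set Q)) (L : Set (ℕ → A))
    (u0 B : List A) : ℕ := sSup {m | NestP δ q0 α L u0 m B}

lemma NestP_zero (δ : Q → A → Q) (q0 : Q) (α : Set (Set Q)) (L : Set (ℕ → A))
    (u0 B : List A) : NestP δ q0 α L u0 0 B := trivial

lemma rank_spec (δ : Q → A → Q) (q0 : Q) (α : Set (Set Q))
    (hspec : ∀ w : ℕ → A, w ∈ L ↔ infSet (runOf δ q0 w) ∈ α) (u0 : List A)
    {B : List A} (hB : UInv L u0 B) (hBne : B ≠ []) :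
    rank δ q0 α L u0 B ≤ Fintype.card Q ∧
      NestP δ q0 α L u0 (rank δ q0 α L u0 B) B := by
  have hbd : ∀ m ∈ {m | NestP δ q0 α L u0 m B}, m ≤ Fintype.card Q := by
    intro m hm
    obtain ⟨H, _, hle⟩ := nest_bound δ q0 α hspec u0 m B hB hBne hm
    omega
  have hne : {m | NestP δ q0 α L u0 m B}.Nonempty := ⟨0, NestP_zero δ q0 α L u0 B⟩
  have hbdd : BddAbove {m | NestP δ q0 α L u0 m B} := ⟨Fintype.card Q, hbd⟩
  exact ⟨csSup_le hne hbd, Nat.sSup_mem hne hbdd⟩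

lemma rank_step (δ : Q → A → Q) (q0 : Q) (α : Set (Set Q))
    (hspec : ∀ w : ℕ → A, w ∈ L ↔ infSet (runOf δ q0 w) ∈ α) (u0 : List A)
    {B B' z : List A} (hB : UInv L u0 B) (hBne : B ≠ [])
    (hB' : B' = wrep B (2 * idemM Q) ++ z) (hInv' : UInv L u0 B')
    (hσ : ¬(sig δ q0 α u0 B' ↔ sig δ q0 α u0 B)) :
    rank δ q0 α L u0 B' + 1 ≤ rank δ q0 α L u0 B := by
  have hBne' : B' ≠ [] := hB' ▸ loop_ext_ne_nil hBne z
  have hmem : NestP δ q0 α L u0 (rank δ q0 α L u0 B' + 1) B :=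
    ⟨B', z, hB', hInv', hσ, (rank_spec δ q0 α hspec u0 hInv' hBne').2⟩
  have hbd : ∀ m ∈ {m | NestP δ q0 α L u0 m B}, m ≤ Fintype.card Q := by
    intro m hm
    obtain ⟨H, _, hle⟩ := nest_bound δ q0 α hspec u0 m B hB hBne hm
    omega
  exact le_csSup ⟨Fintype.card Q, hbd⟩ hmem

lemma CL (δ : Q → A → Q) (q0 : Q) (α : Set (Set Q))
    (hspec : ∀ w : ℕ → A, w ∈ L ↔ infSet (runOf δ q0 w) ∈ α) (u0 : List A) :
    ∀ c : ℕ, ∀ B : List A, UInv L u0 B → B ≠ [] →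
    (Even c ↔ sig δ q0 α u0 B) → 2 * rank δ q0 α L u0 B ≤ c →
    ColorAtMost L u0 c (wrep B (2 * idemM Q)) := by
  intro c
  induction c using Nat.strong_induction_on with
  | _ c IH =>
    intro B hB hBne hpar hrk
    rw [CAM_iff]
    intro z hz
    have hBne' : wrep B (2 * idemM Q) ++ z ≠ [] := loop_ext_ne_nil hBne z
    by_cases hσ : sig δ q0 α u0 (wrep B (2 * idemM Q) ++ z) ↔ sig δ q0 α u0 B
    · left
      have hm : upw u0 (wrep B (2 * idemM Q) ++ z) ∈ L ↔
          sig δ q0 α u0 (wrep B (2 * idemM Q) ++ z) :=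
        mem_upw_iff δ q0 α hspec u0 hBne' [] (UInv_nil u0)
      exact hm.trans (hσ.trans hpar.symm)
    · right
      have hrk' : rank δ q0 α L u0 (wrep B (2 * idemM Q) ++ z) + 1
          ≤ rank δ q0 α L u0 B :=
        rank_step δ q0 α hspec u0 hB hBne rfl hz hσ
      have hc2 : 2 ≤ c := by omega
      have hpar' : Even (c - 1) ↔ sig δ q0 α u0 (wrep B (2 * idemM Q) ++ z) := by
        have h2 : Even (c - 1) ↔ ¬ Even c := by
          rw [Nat.even_iff, Nat.even_iff]; omega
        rw [h2]; tauto
      have hcam := IH (c-1) (by omega) (wrep B (2 * idemM Q) ++ z) hz hBne' hpar'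
        (by omega)
      exact ⟨2 * idemM Q, by have := idemM_pos Q; omega, ⟨c - 1, by omega⟩, hcam⟩

lemma exists_CAM_aux (δ : Q → A → Q) (q0 : Q) (α : Set (Set Q))
    (hspec : ∀ w : ℕ → A, w ∈ L ↔ infSet (runOf δ q0 w) ∈ α) (u0 T : List A) :
    ∃ c, ColorAtMost L u0 c T := by
  classical
  set n := Fintype.card Q with hn
  refine ⟨if upw u0 [] ∈ L then 2*n+2 else 2*n+3, ?_⟩
  rw [CAM_iff]
  intro z hz
  by_cases hB : T ++ z = []
  · left
    rw [hB]
    split_ifs with hmem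
    · exact iff_of_true hmem ⟨n+1, by ring⟩
    · refine iff_of_false hmem ?_
      rw [Nat.even_iff]
      omega
  · right
    have hrkle : rank δ q0 α L u0 (T ++ z) ≤ n :=
      (rank_spec δ q0 α hspec u0 hz hB).1
    set cr := 2 * rank δ q0 α L u0 (T ++ z) +
      (if sig δ q0 α u0 (T ++ z) then 0 else 1) with hcr
    have hcrlt : cr < (if upw u0 [] ∈ L then 2*n+2 else 2*n+3) := by
      split_ifs <;> (rw [hcr]; split_ifs <;> omega)
    have hpar : Even cr ↔ sig δ q0 α u0 (T ++ z) := by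
      rw [hcr]
      split_ifs with hs
      · exact iff_of_true ⟨rank δ q0 α L u0 (T ++ z), by ring⟩ hs
      · refine iff_of_false ?_ hs
        rw [Nat.even_iff]
        omega
    have hcam := CL δ q0 α hspec u0 cr (T ++ z) hz hB hpar (by omega)
    exact ⟨2 * idemM Q, by have := idemM_pos Q; omega, ⟨cr, hcrlt⟩, hcam⟩

end Bound

lemma exists_CAM {L : Set (ℕ → A)} (hreg : OmegaRegular L) (u0 T : List A) :
    ∃ c, ColorAtMost L u0 c T := by
  obtain ⟨Q, hF, q0, δ, α, hspec⟩ := hreg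
  letI := hF
  exact @exists_CAM_aux A _ L Q hF δ q0 α hspec u0 T


/-! ### Alignment of two decompositions -/

lemma pl_upw (u v : List A) (b s : ℕ) (hs : s ≤ v.length) :
    pl (upw u v) (u.length + b * v.length + s) = u ++ (wrep v b ++ v.take s) := by
  apply List.ext_getElem (by simp; omega)
  intro j h1 h2
  rw [pl_getElem]
  by_cases hj : j < u.length
  · rw [show upw u v j = u[j] from wcat_lt _ _ hj, List.getElem_append_left hj]
  · push_neg at hj
    have hjlt : j < u.length + b * v.length + s := by simpa using h1
    have hvl : 0 < v.length := by
      rcases Nat.eq_zero_or_pos v.length with h0 | h0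
      · rw [h0] at hjlt; omega
      · exact h0
    rw [List.getElem_append_right hj]
    set t := j - u.length with htdef
    have htlt : t < b * v.length + s := by omega
    rw [show upw u v j = wpow v (j - u.length) from wcat_ge _ _ hj, wpow_apply]
    by_cases ht : t < b * v.length
    · rw [List.getElem_append_left (by simpa using ht), getElem_wrep _ _ (by simpa using ht),
        List.getD_eq_getElem _ _ (Nat.mod_lt _ hvl)]
    · push_neg at ht
      have h5 : t - b * v.length < s := by omega
      have hmod : t % v.length = t - b * v.length := by
        conv_lhs => rw [show t = v.length * b + (t - b * v.length) by
          rw [Nat.mul_comm]; omega]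
        rw [Nat.mul_add_mod, Nat.mod_eq_of_lt (by omega)]
      rw [List.getElem_append_right (by simpa using ht), hmod]
      rw [List.getD_eq_getElem _ _ (by omega), List.getElem_take]
      congr 1
      simp
      omega

/-- The main comparison: any invariant decomposition of the same word has color
at least the color of a reliable decomposition. -/
lemma core (hreg : OmegaRegular L) {u v : List A} (hv : v ≠ []) (hrel : UReliable L u v)
    {u' v' : List A} (hv' : v' ≠ []) (hw : upw u v = upw u' v') (hinv' : UInv L u' v')
    {c : ℕ} (hcam : ColorAtMost L u' c v') :
    sInf {c | ColorAtMost L u c v} ≤ c := by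
  by_contra hlt
  push_neg at hlt
  set c0 := sInf {c | ColorAtMost L u c v} with hc0
  have hnotCAM : ∀ i, 0 < i → ¬ ColorAtMost L u c (wrep v i) := by
    intro i hi hcc
    have hrel2 : URel L u (wrep v i) := URel_of_UInv (UInv_wrep hrel.1 i)
    have hst := hrel.2 i hi
    rw [ncol, ncol, if_pos (URel_of_UInv hrel.1), if_pos hrel2] at hst
    have he : sInf {c | ColorAtMost L u c (wrep v i)} = c0 := by exact_mod_cast hst.symm
    have hle : sInf {c | ColorAtMost L u c (wrep v i)} ≤ c := Nat.sInf_le hcc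
    omega
  have hvl : 0 < v.length := List.length_pos_iff.mpr hv
  have hv'l : 0 < v'.length := List.length_pos_iff.mpr hv'
  set k := u.length + 1 with hk
  set n := u'.length + k * v'.length with hn
  have hnu : u.length ≤ n := by
    have : k * 1 ≤ k * v'.length := Nat.mul_le_mul_left k hv'l
    omega
  set q := (n - u.length) / v.length with hq
  set r := (n - u.length) % v.length with hrdef
  have hr : r < v.length := Nat.mod_lt _ hvl
  have hdm := Nat.div_add_mod (n - u.length) v.length
  have hqr : n = u.length + q * v.length + r := by
    rw [Nat.mul_comm v.length q] at hdm
    omega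
  set x := v.take r with hx
  set u0 := u ++ wrep v q with hu0
  have E1 : u' ++ wrep v' k = u0 ++ x := by
    have h1 := pl_upw u' v' k 0 (by omega)
    have h2 := pl_upw u v q r (le_of_lt hr)
    rw [← hw] at h1
    rw [show u'.length + k * v'.length + 0 = n by omega] at h1
    rw [show u.length + q * v.length + r = n by omega] at h2
    rw [h2] at h1
    rw [hu0, hx]
    simpa [List.append_assoc] using h1.symm
  set i := v'.length + 2 with hi
  obtain ⟨z, hbad⟩ := exists_bad_of_not_CAM (hnotCAM i (by omega))
  set Db := v.drop r ++ (wrep v (i-1) ++ z) with hDb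
  have hxDb : wrep v i ++ z = x ++ Db := by
    rw [hDb, hx, show i = (i-1)+1 by omega, wrep_succ]
    conv_rhs => rw [← List.append_assoc, List.take_append_drop]
    simp [List.append_assoc]
  rw [hxDb] at hbad
  have hsim : simL L u0 u := simL_symm (UInv_wrep hrel.1 q)
  have hbadU := bad_conj c u u0 x Db hsim hbad
  have hsim' : simL L u' (u0 ++ x) := by rw [← E1]; exact UInv_wrep hinv' k
  have hcamU : ColorAtMost L (u0 ++ x) c v' := CAM_congr_base hsim' c v' hcam
  -- v' is a prefix of Db ++ x
  have hlen2 : v'.length ≤ (v.length - r) + (i-1) * v.length := by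
    have h7 : i - 1 = v'.length + 1 := by omega
    have h8 : (v'.length + 1) * 1 ≤ (v'.length + 1) * v.length :=
      Nat.mul_le_mul_left _ hvl
    rw [h7]
    omega
  have hB : ∀ j, j < (v.length - r) + (i-1) * v.length →
      ∀ (hj2 : j < (v.drop r ++ wrep v (i-1)).length),
      upw u v (n + j) = (v.drop r ++ wrep v (i-1))[j] := by
    intro j hjb hj2
    have h3 : u.length ≤ n + j := by omega
    rw [show upw u v (n + j) = wpow v (n + j - u.length) from wcat_ge _ _ h3]
    have e4 : n + j - u.length = v.length * q + (r + j) := by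
      rw [Nat.mul_comm]; omega
    rw [e4, wpow_apply, Nat.mul_add_mod]
    by_cases hj : j < v.length - r
    · rw [List.getElem_append_left (by simp [List.length_drop]; omega)]
      rw [Nat.mod_eq_of_lt (by omega), List.getD_eq_getElem _ _ (by omega),
        List.getElem_drop]
    · push_neg at hj
      rw [List.getElem_append_right (by simp [List.length_drop]; omega)]
      rw [getElem_wrep _ _ (by simp [List.length_drop] at hj2 ⊢; omega)]
      have e5 : (r + j) % v.length = (j - (v.length - r)) % v.length := by
        conv_lhs => rw [show r + j = (j - (v.length - r)) + v.length by omega]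
        rw [Nat.add_mod_right]
      rw [e5, List.getD_eq_getElem _ _ (Nat.mod_lt _ hvl)]
      congr 2
      simp [List.length_drop]
  have hA : ∀ j, j < v'.length → ∀ (hj2 : j < v'.length),
      upw u' v' (n + j) = v'[j] := by
    intro j hjb hj2
    have h3 : u'.length ≤ n + j := by omega
    rw [show upw u' v' (n + j) = wpow v' (n + j - u'.length) from wcat_ge _ _ h3]
    have e4 : n + j - u'.length = v'.length * k + j := by
      rw [Nat.mul_comm]; omega
    rw [e4, wpow_apply, Nat.mul_add_mod, Nat.mod_eq_of_lt hjb,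
      List.getD_eq_getElem _ _ hjb]
  have hvtake : v' = (v.drop r ++ wrep v (i-1)).take v'.length := by
    have hlen3 : v'.length ≤ (v.drop r ++ wrep v (i-1)).length := by
      rw [List.length_append, List.length_drop, length_wrep]
      omega
    apply List.ext_getElem
    · rw [List.length_take]
      omega
    intro j h1 h2
    rw [List.getElem_take]
    have hj2 : j < (v.drop r ++ wrep v (i-1)).length := by omega
    have hjb : j < (v.length - r) + (i-1) * v.length := by
      rw [List.length_append, List.length_drop, length_wrep] at hj2
      omega
    rw [← hB j hjb hj2, hw]
    exact (hA j h1 h1).symm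
  have hpre : v' <+: Db ++ x := by
    have p1 : v' <+: (v.drop r ++ wrep v (i-1)) := by
      rw [hvtake]; exact List.take_prefix _ _
    have e6 : Db ++ x = (v.drop r ++ wrep v (i-1)) ++ (z ++ x) := by
      simp [hDb, List.append_assoc]
    rw [e6]
    exact p1.trans (List.prefix_append _ _)
  obtain ⟨d, hd⟩ := hpre
  have hcamD : ColorAtMost L (u0 ++ x) c (Db ++ x) := by
    rw [← hd]
    exact CAM_mono_prefix hcamU d
  exact bad_refutes hbadU hcamD

end NC

/-- the natural color of an ultimately periodic word equals the color
of any of its reliable normalizations. -/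
theorem infcolor_eq_reliable_color {A : Type} [Inhabited A] (L : Set (ℕ → A))
    (hreg : OmegaRegular L) (u v : List A) (hv : v ≠ []) (hrel : UReliable L u v) :
    ncol L u v = ((icol L (upw u v) : ℕ) : WithBot ℕ) := by
  classical
  set c0 := sInf {c | ColorAtMost L u c v} with hc0
  have hncol : ncol L u v = (c0 : WithBot ℕ) := by
    rw [ncol, if_pos (NC.URel_of_UInv hrel.1)]
  rw [hncol]
  have hic : icol L (upw u v) = c0 := by
    apply le_antisymm
    · apply Nat.sInf_le
      exact ⟨u, v, hv, rfl, hrel.1, hncol⟩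
    · refine le_csInf ⟨c0, ?_⟩ ?_
      · exact ⟨u, v, hv, rfl, hrel.1, hncol⟩
      rintro b ⟨u1, v1, hv1, hw1, hinv1, hncol1⟩
      rw [ncol, if_pos (NC.URel_of_UInv hinv1)] at hncol1
      have hb : sInf {c | ColorAtMost L u1 c v1} = b := by exact_mod_cast hncol1
      obtain ⟨cc, hcc⟩ := NC.exists_CAM hreg u1 v1
      have hmem : sInf {c | ColorAtMost L u1 c v1} ∈ {c | ColorAtMost L u1 c v1} :=
        Nat.sInf_mem ⟨cc, hcc⟩
      rw [hb] at hmem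
      exact NC.core hreg hv hrel hv1 hw1 hinv1 hmem
  rw [hic]
end

section
/- In every maximal strongly connected component of a progress DFA of the colorful FDFA, either all states are accepting or all states are rejecting. Equivalently: if states q_x and q_y (reached by words x and y) lie in the same SCC of the colorful progress DFA for u, then col_u(x) = col_u(y). -/
open scoped Classical

/-- The minimal nonnegative natural color of the language `L`. -/
noncomputable def minColL {A : Type} [Inhabited A] (L : Set (ℕ → A)) : ℕ :=
  sInf {c : ℕ | ∃ u v : List A, v ≠ [] ∧ ncol L u v = (c : WithBot ℕ)}

/-- The minimal nonnegative natural color of words wrt `u`. -/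
noncomputable def minColU {A : Type} [Inhabited A] (L : Set (ℕ → A)) (u : List A) : ℕ :=
  if ({c : ℕ | ∃ v : List A, v ≠ [] ∧ ncol L u v = (c : WithBot ℕ)}).Nonempty then
    sInf {c : ℕ | ∃ v : List A, v ≠ [] ∧ ncol L u v = (c : WithBot ℕ)}
  else minColL L

/-- The recolored natural color, where irrelevant words get the minimal nonnegative
color of `u`: `Col_u(v) = max(col_u(v), mincol(u))`. -/
noncomputable def nCol {A : Type} [Inhabited A] (L : Set (ℕ → A)) (u v : List A) : ℕ :=
  max (WithBot.unbotD 0 (ncol L u v)) (minColU L u)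

namespace SCCAux
set_option linter.unusedSectionVars false

open List

section Words

variable {A : Type} [Inhabited A]

theorem wcat_nil (w : ℕ → A) : wcat ([] : List A) w = w := by
  funext n
  simp [wcat]

theorem wcat_zero (a : A) (s : List A) (w : ℕ → A) : wcat (a :: s) w 0 = a := by
  simp [wcat]

theorem wcat_succ (a : A) (s : List A) (w : ℕ → A) (n : ℕ) :
    wcat (a :: s) w (n + 1) = wcat s w n := by
  by_cases h : n < s.length
  · simp [wcat, h, Nat.succ_lt_succ h]
  · have h' : ¬ (n + 1 < (a :: s).length) := by simp [Nat.succ_lt_succ_iff]; omega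
    simp [wcat, h, h']

theorem wcat_append (s t : List A) (w : ℕ → A) :
    wcat (s ++ t) w = wcat s (wcat t w) := by
  induction s with
  | nil => simp [wcat_nil]
  | cons a s ih =>
    funext n
    cases n with
    | zero => simp [List.cons_append, wcat_zero]
    | succ n =>
      rw [List.cons_append, wcat_succ, wcat_succ, ih]

theorem uinv_nil (L : Set (ℕ → A)) (u : List A) : UInv L u ([] : List A) := by
  intro w
  rw [List.append_nil]

theorem uinv_append {L : Set (ℕ → A)} {u a b : List A}
    (ha : UInv L u a) (hb : UInv L u b) : UInv L u (a ++ b) := by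
  intro w
  have h1 := hb w
  have h2 := ha (wcat b w)
  have e1 : wcat (u ++ (a ++ b)) w = wcat (u ++ a) (wcat b w) := by
    rw [wcat_append, wcat_append, wcat_append]
  have e2 : wcat (u ++ b) w = wcat u (wcat b w) := by rw [wcat_append]
  rw [e1]
  rw [e2] at h1
  exact h1.trans h2

theorem wrep_zero (v : List A) : wrep v 0 = [] := rfl

theorem wrep_succ (v : List A) (i : ℕ) : wrep v (i + 1) = v ++ wrep v i := by
  simp [wrep, List.replicate_succ]

theorem wrep_one (v : List A) : wrep v 1 = v := by
  simp [wrep]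

theorem wrep_add (v : List A) (a b : ℕ) : wrep v (a + b) = wrep v a ++ wrep v b := by
  induction a with
  | zero => simp [wrep_zero]
  | succ a ih =>
    have : a + 1 + b = (a + b) + 1 := by omega
    rw [this, wrep_succ, wrep_succ, ih, List.append_assoc]

theorem length_wrep (v : List A) (i : ℕ) : (wrep v i).length = i * v.length := by
  induction i with
  | zero => simp [wrep_zero]
  | succ i ih => rw [wrep_succ]; simp [ih]; ring

theorem wrep_ne_nil {v : List A} (hv : v ≠ []) {i : ℕ} (hi : 0 < i) :
    wrep v i ≠ [] := by
  have : 0 < (wrep v i).length := by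
    rw [length_wrep]
    have := List.length_pos_iff.mpr hv
    positivity
  exact List.ne_nil_of_length_pos this

theorem uinv_wrep {L : Set (ℕ → A)} {u v : List A} (hv : UInv L u v) (i : ℕ) :
    UInv L u (wrep v i) := by
  induction i with
  | zero => exact uinv_nil L u
  | succ i ih => rw [wrep_succ]; exact uinv_append hv ih

theorem urel_of_urel_append {L : Set (ℕ → A)} {u v z : List A}
    (h : URel L u (v ++ z)) : URel L u v := by
  obtain ⟨z', hz'⟩ := h
  exact ⟨z ++ z', by rwa [← List.append_assoc]⟩

theorem colorAtMost_append {L : Set (ℕ → A)} {u : List A} {c : ℕ} {v : List A}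
    (h : ColorAtMost L u c v) (z : List A) : ColorAtMost L u c (v ++ z) := by
  rw [ColorAtMost] at h ⊢
  intro z' hz'
  rw [List.append_assoc] at hz' ⊢
  exact h (z ++ z') hz'

theorem wpow_add_length {v : List A} (hv : v ≠ []) (n : ℕ) :
    wpow v (n + v.length) = wpow v n := by
  simp [wpow, Nat.add_mod_right]

theorem wpow_eq_of_lt {v : List A} {n : ℕ} (h : n < v.length) :
    wpow v n = v.get ⟨n, h⟩ := by
  have : n % v.length = n := Nat.mod_eq_of_lt h
  simp [wpow, this]
  simp [List.getElem?_eq_getElem h]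

theorem wcat_wpow {v : List A} (hv : v ≠ []) : wcat v (wpow v) = wpow v := by
  funext n
  by_cases h : n < v.length
  · rw [wpow_eq_of_lt h]
    simp [wcat, h]
  · push_neg at h
    have e : n = (n - v.length) + v.length := by omega
    simp only [wcat, dif_neg (by omega : ¬ n < v.length)]
    conv_rhs => rw [e, wpow_add_length hv]

theorem getD_wrep {v : List A} (hv : v ≠ []) :
    ∀ (i : ℕ) (m : ℕ), m < i * v.length →
      (wrep v i).getD m default = v.getD (m % v.length) default := by
  intro i
  induction i with
  | zero => intro m hm; omega
  | succ i ih =>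
    intro m hm
    rw [wrep_succ]
    by_cases h : m < v.length
    · rw [List.getD_append _ _ _ _ h, Nat.mod_eq_of_lt h]
    · push_neg at h
      rw [List.getD_append_right _ _ _ _ h]
      have hlt : m - v.length < i * v.length := by
        have : (i+1) * v.length = i * v.length + v.length := by ring
        omega
      rw [ih _ hlt]
      congr 1
      conv_rhs => rw [(by omega : m = (m - v.length) + v.length)]
      rw [Nat.add_mod_right]

theorem wpow_wrep {v : List A} (hv : v ≠ []) {i : ℕ} (hi : 0 < i) :
    wpow (wrep v i) = wpow v := by
  have hvlen : 0 < v.length := List.length_pos_iff.mpr hv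
  have hlen : 0 < (wrep v i).length := by rw [length_wrep]; positivity
  funext n
  show (wrep v i).getD (n % (wrep v i).length) default = v.getD (n % v.length) default
  have h1 : n % (wrep v i).length < (wrep v i).length := Nat.mod_lt _ hlen
  rw [getD_wrep hv i _ (by rw [length_wrep] at h1 ⊢; exact h1)]
  congr 1
  rw [length_wrep]
  exact Nat.mod_mod_of_dvd n ⟨i, by ring⟩

theorem upw_wrep (u : List A) {v : List A} (hv : v ≠ []) {i : ℕ} (hi : 0 < i) :
    upw u (wrep v i) = upw u v := by
  unfold upw
  rw [wpow_wrep hv hi]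

end Words

end SCCAux

namespace SCCAux

section Automaton

variable {A : Type} [Inhabited A] {Q : Type}

/-- Transition function extended to words. -/
def fw (δ : Q → A → Q) (l : List A) (q : Q) : Q := l.foldl δ q

/-- States visited (strictly after the start) by running `l` from `q`. -/
def vis (δ : Q → A → Q) (l : List A) (q : Q) : Set Q :=
  {s | ∃ n, n < l.length ∧ fw δ (l.take (n + 1)) q = s}

/-- Transition profiles. -/
def Prof (Q A : Type) : Type := (Q → Q) × (Q → Set Q)

instance [Finite Q] : Finite (Prof Q A) := by
  unfold Prof
  infer_instance

/-- Profile multiplication. -/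
def pmul (x y : Prof Q A) : Prof Q A :=
  (y.1 ∘ x.1, fun q => x.2 q ∪ y.2 (x.1 q))

theorem pmul_assoc (x y z : Prof Q A) : pmul (pmul x y) z = pmul x (pmul y z) := by
  unfold pmul
  refine Prod.ext rfl ?_
  funext q
  simp [Set.union_assoc]

/-- The profile of a word. -/
def prof (δ : Q → A → Q) (l : List A) : Prof Q A := (fw δ l, vis δ l)

theorem fw_append (δ : Q → A → Q) (s t : List A) (q : Q) :
    fw δ (s ++ t) q = fw δ t (fw δ s q) := by
  unfold fw
  exact List.foldl_append

theorem fw_concat (δ : Q → A → Q) (s : List A) (a : A) (q : Q) :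
    fw δ (s ++ [a]) q = δ (fw δ s q) a := by
  rw [fw_append]; rfl

theorem vis_append (δ : Q → A → Q) (s t : List A) (q : Q) :
    vis δ (s ++ t) q = vis δ s q ∪ vis δ t (fw δ s q) := by
  ext s'
  constructor
  · rintro ⟨n, hn, rfl⟩
    by_cases h : n < s.length
    · left
      refine ⟨n, h, ?_⟩
      rw [List.take_append_of_le_length (by omega)]
    · right
      push_neg at h
      refine ⟨n - s.length, by simp at hn; omega, ?_⟩
      have e : n + 1 = s.length + (n - s.length + 1) := by omega
      rw [e, List.take_length_add_append, fw_append]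
  · rintro (⟨n, hn, rfl⟩ | ⟨n, hn, rfl⟩)
    · refine ⟨n, by simp; omega, ?_⟩
      rw [List.take_append_of_le_length (by omega)]
    · refine ⟨s.length + n, by simp; omega, ?_⟩
      have e : s.length + n + 1 = s.length + (n + 1) := by omega
      rw [e, List.take_length_add_append, fw_append]

theorem prof_append (δ : Q → A → Q) (s t : List A) :
    prof δ (s ++ t) = pmul (prof δ s) (prof δ t) := by
  unfold prof pmul
  refine Prod.ext ?_ ?_
  · funext q; exact fw_append δ s t q
  · funext q; exact vis_append δ s t q

/-- Idempotent profiles. -/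
def Idem (e : Prof Q A) : Prop := pmul e e = e

theorem exists_idem_pow [Finite Q] (δ : Q → A → Q) (v : List A) :
    ∃ i : ℕ, 0 < i ∧ Idem (prof δ (wrep v i)) := by
  set φ : ℕ → Prof Q A := fun i => prof δ (wrep v i) with hφdef
  have hφ : ∀ a b : ℕ, φ (a + b) = pmul (φ a) (φ b) := by
    intro a b
    show prof δ (wrep v (a + b)) = _
    rw [wrep_add, prof_append]
  obtain ⟨a, b, hne, heq⟩ :=
    Finite.exists_ne_map_eq_of_infinite (fun n : ℕ => φ (n + 1))
  wlog hab : a < b generalizing a b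
  · exact this b a (Ne.symm hne) heq.symm (by omega)
  set m := a + 1 with hm
  set k := b - a with hk
  have hk0 : 0 < k := by omega
  have hmk : φ m = φ (m + k) := by
    have : m + k = b + 1 := by omega
    rw [this]; exact heq
  have step : ∀ d : ℕ, φ (m + d + k) = φ (m + d) := by
    intro d
    have e1 : m + d + k = (m + k) + d := by omega
    rw [e1, hφ (m + k) d, ← hmk, ← hφ m d]
  have iter : ∀ (j : ℕ) (a' : ℕ), m ≤ a' → φ (a' + j * k) = φ a' := by
    intro j
    induction j with
    | zero => intro a' _; simp
    | succ j ih =>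
      intro a' ha'
      have e1 : a' + (j + 1) * k = (a' + j * k) + k := by ring
      have e2 : a' + j * k = m + (a' + j * k - m) := by omega
      rw [e1, e2, step, ← e2, ih a' ha']
  refine ⟨(m + 1) * k, by positivity, ?_⟩
  show pmul (φ ((m+1)*k)) (φ ((m+1)*k)) = φ ((m+1)*k)
  rw [← hφ]
  exact iter (m + 1) ((m + 1) * k) (by nlinarith)

theorem runOf_tail (δ : Q → A → Q) (q : Q) (ω : ℕ → A) :
    ∀ n : ℕ, runOf δ q ω (n + 1) = runOf δ (δ q (ω 0)) (fun k => ω (k + 1)) n := by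
  intro n
  induction n with
  | zero => rfl
  | succ n ih =>
    show δ (runOf δ q ω (n + 1)) (ω (n + 1)) = _
    rw [ih]
    rfl

theorem runOf_add (δ : Q → A → Q) (s : List A) (w : ℕ → A) (q : Q) (n : ℕ) :
    runOf δ q (wcat s w) (s.length + n) = runOf δ (fw δ s q) w n := by
  induction s generalizing q with
  | nil =>
    rw [wcat_nil]
    simp [fw]
  | cons a s ih =>
    have e : (a :: s).length + n = (s.length + n) + 1 := by simp; omega
    rw [e, runOf_tail]
    have e0 : wcat (a :: s) w 0 = a := wcat_zero a s w
    have etail : (fun k => wcat (a :: s) w (k + 1)) = wcat s w := by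
      funext k; exact wcat_succ a s w k
    rw [e0, etail, ih (δ q a)]
    rfl

theorem runOf_wcat_take (δ : Q → A → Q) (s : List A) (ω : ℕ → A) (q : Q) :
    ∀ b : ℕ, b ≤ s.length → runOf δ q (wcat s ω) b = fw δ (s.take b) q := by
  intro b
  induction b with
  | zero => intro _; rfl
  | succ b ih =>
    intro hb
    have hblt : b < s.length := by omega
    show δ (runOf δ q (wcat s ω) b) (wcat s ω b) = _
    rw [ih (by omega)]
    have e1 : wcat s ω b = s.get ⟨b, hblt⟩ := by simp [wcat, hblt]
    have e2 : s.take (b + 1) = s.take b ++ [s.get ⟨b, hblt⟩] := by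
      rw [List.take_succ]
      simp [List.getElem?_eq_getElem hblt]
    rw [e1, e2]
    try rw [fw_concat]

end Automaton

end SCCAux

namespace SCCAux
set_option linter.unusedSectionVars false

section InfSet

variable {A : Type} [Inhabited A] {Q : Type}

theorem fw_idem_fix {δ : Q → A → Q} {W : List A} (hid : Idem (prof δ W)) (q : Q) :
    fw δ W (fw δ W q) = fw δ W q :=
  congrFun (congrArg Prod.fst hid) q

theorem fw_iterate {δ : Q → A → Q} {W : List A} (hid : Idem (prof δ W)) (q : Q) :
    ∀ a : ℕ, 0 < a → (fw δ W)^[a] q = fw δ W q := by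
  intro a
  induction a with
  | zero => omega
  | succ a ih =>
    intro _
    rcases Nat.eq_zero_or_pos a with h | h
    · subst h; simp
    · rw [Function.iterate_succ_apply', ih h, fw_idem_fix hid]

theorem runOf_wpow (δ : Q → A → Q) {W : List A} (hWne : W ≠ []) :
    ∀ (a b : ℕ) (q : Q), b ≤ W.length →
      runOf δ q (wpow W) (a * W.length + b) = fw δ (W.take b) ((fw δ W)^[a] q) := by
  intro a
  induction a with
  | zero =>
    intro b q hb
    simp only [Nat.zero_mul, Nat.zero_add, Function.iterate_zero, id_eq]
    conv_lhs => rw [← wcat_wpow hWne]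
    exact runOf_wcat_take δ W (wpow W) q b hb
  | succ a ih =>
    intro b q hb
    have e : (a + 1) * W.length + b = W.length + (a * W.length + b) := by ring
    rw [e]
    conv_lhs => rw [← wcat_wpow hWne]
    rw [runOf_add, ih b (fw δ W q) hb, ← Function.iterate_succ_apply]

theorem infSet_upw (δ : Q → A → Q) (q0 : Q) (u : List A) {w : List A} (hw : w ≠ [])
    {i : ℕ} (hi : 0 < i) (hid : Idem (prof δ (wrep w i))) :
    infSet (runOf δ q0 (upw u w)) =
      vis δ (wrep w i) (fw δ (wrep w i) (fw δ u q0)) := by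
  set W := wrep w i with hW
  set qu := fw δ u q0 with hqu
  set F := fw δ W with hF
  have hWne : W ≠ [] := wrep_ne_nil hw hi
  have hWlen : 0 < W.length := List.length_pos_iff.mpr hWne
  have hupw : upw u w = wcat u (wpow W) := by
    unfold upw
    rw [hW, wpow_wrep hw hi]
  have hrun : ∀ n : ℕ, runOf δ q0 (upw u w) (u.length + n) = runOf δ qu (wpow W) n := by
    intro n
    rw [hupw, runOf_add]
  have hpfix : F (F qu) = F qu := fw_idem_fix hid qu
  ext s
  constructor
  · intro hs
    obtain ⟨m, hm1, hm2⟩ := hs (u.length + W.length)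
    set n' := m - u.length with hn'
    have hmn : m = u.length + n' := by omega
    have hn'W : W.length ≤ n' := by omega
    have hrm : runOf δ qu (wpow W) n' = s := by
      rw [← hrun n', ← hmn]; exact hm2
    set a := n' / W.length with ha
    set b := n' % W.length with hb
    have hab : n' = a * W.length + b := by
      have := Nat.div_add_mod n' W.length
      rw [ha, hb, Nat.mul_comm]
      omega
    have ha1 : 0 < a := Nat.one_le_div_iff hWlen |>.mpr hn'W
    have hbW : b < W.length := Nat.mod_lt _ hWlen
    rw [hab, runOf_wpow δ hWne a b qu (le_of_lt hbW), ← hF,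
      fw_iterate hid qu a ha1] at hrm
    rcases Nat.eq_zero_or_pos b with hb0 | hbpos
    · have hs' : s = F qu := by
        rw [← hrm, hb0]
        rfl
      refine ⟨W.length - 1, by omega, ?_⟩
      have : W.length - 1 + 1 = W.length := by omega
      rw [this, List.take_length, hs', ← hF, hpfix]
    · refine ⟨b - 1, by omega, ?_⟩
      have : b - 1 + 1 = b := by omega
      rw [this]
      exact hrm
  · rintro ⟨n, hn, hfw⟩
    intro N
    refine ⟨u.length + ((N + 1) * W.length + (n + 1)), ?_, ?_⟩
    · have : N + 1 ≤ (N + 1) * W.length := Nat.le_mul_of_pos_right _ hWlen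
      omega
    · rw [hrun, runOf_wpow δ hWne (N + 1) (n + 1) qu (by omega), ← hF,
        fw_iterate hid qu (N + 1) (by omega)]
      exact hfw

end InfSet

end SCCAux

namespace SCCAux
set_option linter.unusedSectionVars false

section Chains

variable {A : Type} [Inhabited A] {Q : Type}

/-- The acceptance value of a profile: the loop of `e` from `qu`. -/
def Aval (α : Set (Set Q)) (qu : Q) (e : Prof Q A) : Prop := e.2 (e.1 qu) ∈ α

/-- Mutually reachable idempotents have the same acceptance value. -/
theorem aval_eq_of_mutual (α : Set (Set Q)) (qu : Q) {e f : Prof Q A}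
    (hef : pmul e f = f) (hfe : pmul f e = e) :
    (Aval α qu e ↔ Aval α qu f) := by
  have hf1 : f.1 = f.1 ∘ e.1 := (congrArg Prod.fst hef).symm
  have he1 : e.1 = e.1 ∘ f.1 := (congrArg Prod.fst hfe).symm
  have hf2 : ∀ q, f.2 q = e.2 q ∪ f.2 (e.1 q) := fun q =>
    (congrFun (congrArg Prod.snd hef) q).symm
  have he2 : ∀ q, e.2 q = f.2 q ∪ e.2 (f.1 q) := fun q =>
    (congrFun (congrArg Prod.snd hfe) q).symm
  have hV : e.2 = f.2 := by
    funext q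
    apply Set.Subset.antisymm
    · rw [hf2 q]; exact Set.subset_union_left
    · rw [he2 q]; exact Set.subset_union_left
  have hmon1 : ∀ q, f.2 (e.1 q) ⊆ f.2 q := by
    intro q
    have := hf2 q
    rw [hV] at this
    rw [this]
    exact Set.subset_union_right
  have hmon2 : ∀ q, f.2 (f.1 q) ⊆ f.2 q := by
    intro q
    have := he2 q
    rw [hV] at this
    conv_rhs => rw [this]
    exact Set.subset_union_right
  have hpe : e.1 qu = e.1 (f.1 qu) := congrFun he1 qu
  have hpf : f.1 qu = f.1 (e.1 qu) := congrFun hf1 qu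
  have hkey : f.2 (e.1 qu) = f.2 (f.1 qu) := by
    apply Set.Subset.antisymm
    · rw [hpe]; exact hmon1 (f.1 qu)
    · rw [hpf]; exact hmon2 (e.1 qu)
  unfold Aval
  rw [hV, hkey]

/-- The step relation between idempotents. -/
def PRel (e f : Prof Q A) : Prop := Idem e ∧ Idem f ∧ pmul e f = f

theorem prel_trans {e f g : Prof Q A} (h1 : PRel e f) (h2 : PRel f g) : PRel e g := by
  refine ⟨h1.1, h2.2.1, ?_⟩
  calc pmul e g = pmul e (pmul f g) := by rw [h2.2.2]
    _ = pmul (pmul e f) g := (pmul_assoc _ _ _).symm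
    _ = pmul f g := by rw [h1.2.2]
    _ = g := h2.2.2

/-- Lengths of alternating chains starting at `e`. -/
def chainSet (α : Set (Set Q)) (qu : Q) (e : Prof Q A) : Set ℕ :=
  {n | ∃ c : ℕ → Prof Q A, c 0 = e ∧ (∀ k < n, PRel (c k) (c (k + 1))) ∧
    (∀ k < n, ¬ (Aval α qu (c (k + 1)) ↔ Aval α qu (c k)))}

theorem zero_mem_chainSet (α : Set (Set Q)) (qu : Q) (e : Prof Q A) :
    0 ∈ chainSet α qu e :=
  ⟨fun _ => e, rfl, fun k hk => absurd hk (Nat.not_lt_zero k), fun k hk =>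
    absurd hk (Nat.not_lt_zero k)⟩

theorem chainSet_lt_card [Finite Q] (α : Set (Set Q)) (qu : Q) (e : Prof Q A)
    {n : ℕ} (hn : n ∈ chainSet α qu e) :
    n < Nat.card (Prof Q A) := by
  obtain ⟨c, hc0, hrel, halt⟩ := hn
  have crel : ∀ j k, j < k → k ≤ n → PRel (c j) (c k) := by
    have aux : ∀ d j, j + d + 1 ≤ n → PRel (c j) (c (j + d + 1)) := by
      intro d
      induction d with
      | zero => intro j hj; exact hrel j (by omega)
      | succ d ih =>
        intro j hj
        have h1 : PRel (c j) (c (j + d + 1)) := ih j (by omega)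
        have h2 : PRel (c (j + d + 1)) (c (j + d + 2)) := hrel (j + d + 1) (by omega)
        have e2 : j + (d + 1) + 1 = j + d + 2 := by omega
        rw [e2]
        exact prel_trans h1 h2
    intro j k hjk hkn
    have : k = j + (k - j - 1) + 1 := by omega
    rw [this]
    exact aux (k - j - 1) j (by omega)
  have hinj : Function.Injective (fun k : Fin (n + 1) => c k) := by
    intro ⟨j, hj⟩ ⟨k, hk⟩ hjk
    simp only at hjk
    by_contra hne
    simp only [Fin.mk.injEq] at hne
    wlog hlt : j < k generalizing j k
    · exact this k hk j hj hjk.symm (Ne.symm hne) (by omega)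
    rcases Nat.lt_or_ge (j + 1) k with h | h
    · have r1 : PRel (c j) (c (j + 1)) := hrel j (by omega)
      have r2 : PRel (c (j + 1)) (c j) := by
        have := crel (j + 1) k h (by omega)
        rwa [← hjk] at this
      exact halt j (by omega) (aval_eq_of_mutual α qu r2.2.2 r1.2.2)
    · have : k = j + 1 := by omega
      subst this
      exact halt j (by omega) (by rw [hjk])
  have h := Nat.card_le_card_of_injective _ hinj
  rw [Nat.card_eq_fintype_card, Fintype.card_fin] at h
  omega

end Chains

end SCCAux

namespace SCCAux
set_option linter.unusedSectionVars false

section Mu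

variable {A : Type} [Inhabited A] {Q : Type} [Finite Q]

/-- Max length of an alternating chain of idempotents starting at `e`. -/
noncomputable def mu (α : Set (Set Q)) (qu : Q) (e : Prof Q A) : ℕ :=
  sSup (chainSet α qu e)

theorem bddAbove_chainSet (α : Set (Set Q)) (qu : Q) (e : Prof Q A) :
    BddAbove (chainSet α qu e) :=
  ⟨Nat.card (Prof Q A), fun _ hn => le_of_lt (chainSet_lt_card α qu e hn)⟩

theorem mu_mem (α : Set (Set Q)) (qu : Q) (e : Prof Q A) :
    mu α qu e ∈ chainSet α qu e :=
  Nat.sSup_mem ⟨0, zero_mem_chainSet α qu e⟩ (bddAbove_chainSet α qu e)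

theorem mu_lt_card (α : Set (Set Q)) (qu : Q) (e : Prof Q A) :
    mu α qu e < Nat.card (Prof Q A) :=
  chainSet_lt_card α qu e (mu_mem α qu e)

theorem mu_lt_of_rel (α : Set (Set Q)) (qu : Q) {e f : Prof Q A}
    (hrel : PRel e f) (halt : ¬ (Aval α qu f ↔ Aval α qu e)) :
    mu α qu f < mu α qu e := by
  obtain ⟨c, hc0, hrel', halt'⟩ := mu_mem α qu f
  have hmem : mu α qu f + 1 ∈ chainSet α qu e := by
    refine ⟨fun k => match k with | 0 => e | k + 1 => c k, rfl, ?_, ?_⟩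
    · intro k hk
      match k with
      | 0 =>
        show PRel e (c 0)
        rw [hc0]; exact hrel
      | k + 1 => exact hrel' k (by omega)
    · intro k hk
      match k with
      | 0 =>
        show ¬ (Aval α qu (c 0) ↔ Aval α qu e)
        rw [hc0]; exact halt
      | k + 1 => exact halt' k (by omega)
  have h2 := le_csSup (bddAbove_chainSet α qu e) hmem
  exact Nat.lt_of_lt_of_le (Nat.lt_succ_self _) h2

end Mu

section Main

variable {A : Type} [Inhabited A] {Q : Type} [Finite Q]

variable (δ : Q → A → Q) (q0 : Q) (α : Set (Set Q)) (L : Set (ℕ → A)) (u : List A)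

/-- The color assigned to an (idempotent-profile) word. -/
noncomputable def chi (qu : Q) (w : List A) : ℕ :=
  2 * mu α qu (prof δ w) + if Aval α qu (prof δ w) then 0 else 1

theorem memL1 (hL : ∀ w : ℕ → A, w ∈ L ↔ infSet (runOf δ q0 w) ∈ α)
    {w : List A} (hw : w ≠ []) (hid : Idem (prof δ w)) :
    upw u w ∈ L ↔ Aval α (fw δ u q0) (prof δ w) := by
  have h1 : Idem (prof δ (wrep w 1)) := by rwa [wrep_one]
  rw [hL, infSet_upw δ q0 u hw one_pos h1, wrep_one]
  exact Iff.rfl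

theorem even_chi_iff (qu : Q) (w : List A) :
    (Even (chi δ α qu w) ↔ Aval α qu (prof δ w)) := by
  unfold chi
  by_cases hA : Aval α qu (prof δ w)
  · simp [hA, even_two_mul]
  · simp [hA, Nat.even_add_one, even_two_mul]

theorem chi_le (qu : Q) (w : List A) :
    chi δ α qu w ≤ 2 * mu α qu (prof δ w) + 1 := by
  unfold chi
  split <;> omega

theorem chi_ge (qu : Q) (w : List A) :
    2 * mu α qu (prof δ w) ≤ chi δ α qu w := by
  unfold chi
  split <;> omega

theorem ML (hL : ∀ w : ℕ → A, w ∈ L ↔ infSet (runOf δ q0 w) ∈ α) (n : ℕ) :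
    ∀ w : List A, UInv L u w → w ≠ [] → Idem (prof δ w) →
      chi δ α (fw δ u q0) w ≤ n → ColorAtMost L u (chi δ α (fw δ u q0) w) w := by
  induction n using Nat.strong_induction_on with
  | _ n IH =>
    intro w hw hne hid hle
    set qu := fw δ u q0 with hqu
    rw [ColorAtMost]
    intro z hz
    have haw : upw u w ∈ L ↔ Aval α qu (prof δ w) := memL1 δ q0 α L u hL hne hid
    by_cases hca : (upw u (w ++ z) ∈ L ↔ upw u w ∈ L)
    · left
      exact hca.trans (haw.trans (even_chi_iff δ α qu w).symm)
    · right
      obtain ⟨i, hi, hidem⟩ := exists_idem_pow δ (w ++ z)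
      have hwzne : w ++ z ≠ [] := fun h => hne (List.append_eq_nil_iff.mp h).1
      set w'' := wrep (w ++ z) i with hw''
      have hw''ne : w'' ≠ [] := wrep_ne_nil hwzne hi
      have hw''inv : UInv L u w'' := uinv_wrep hz i
      have hsplit : w'' = w ++ (z ++ wrep (w ++ z) (i - 1)) := by
        rw [hw'']
        conv_lhs => rw [show i = (i - 1) + 1 by omega]
        rw [wrep_succ, List.append_assoc]
      have hRel : PRel (prof δ w) (prof δ w'') := by
        refine ⟨hid, hidem, ?_⟩
        conv_lhs => rw [hsplit, prof_append, ← pmul_assoc, hid]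
        rw [← prof_append, ← hsplit]
      have haw'' : upw u w'' ∈ L ↔ Aval α qu (prof δ w'') :=
        memL1 δ q0 α L u hL hw''ne hidem
      have hupw'' : upw u w'' = upw u (w ++ z) := upw_wrep u hwzne hi
      rw [hupw''] at haw''
      have halt : ¬ (Aval α qu (prof δ w'') ↔ Aval α qu (prof δ w)) := by
        intro hiff
        exact hca (haw''.trans (hiff.trans haw.symm))
      have hmu := mu_lt_of_rel α qu hRel halt
      have hchi : chi δ α qu w'' < chi δ α qu w := by
        have h1 := chi_le δ α qu w''
        have h2 := chi_ge δ α qu w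
        omega
      refine ⟨i, hi, ⟨chi δ α qu w'', hchi⟩, ?_⟩
      exact IH (chi δ α qu w'') (by omega) w'' hw''inv hw''ne hidem le_rfl

theorem exists_colorAtMost (hL : ∀ w : ℕ → A, w ∈ L ↔ infSet (runOf δ q0 w) ∈ α)
    (v : List A) (hv : v ≠ []) :
    ColorAtMost L u (2 * Nat.card (Prof Q A) + 2) v := by
  rw [ColorAtMost]
  intro z hz
  right
  obtain ⟨i, hi, hidem⟩ := exists_idem_pow δ (v ++ z)
  have hvzne : v ++ z ≠ [] := fun h => hv (List.append_eq_nil_iff.mp h).1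
  set qu := fw δ u q0 with hqu
  set w'' := wrep (v ++ z) i with hw''
  have hw''ne : w'' ≠ [] := wrep_ne_nil hvzne hi
  have hcol := ML δ q0 α L u hL (chi δ α qu w'') w'' (uinv_wrep hz i) hw''ne hidem le_rfl
  have hlt : chi δ α qu w'' < 2 * Nat.card (Prof Q A) + 2 := by
    have h1 := chi_le δ α qu w''
    have h2 := mu_lt_card α qu (prof δ w'' : Prof Q A)
    omega
  exact ⟨i, hi, ⟨chi δ α qu w'', hlt⟩, hcol⟩

end Main

section Glue

variable {A : Type} [Inhabited A]

theorem nCol_append_le {L : Set (ℕ → A)} (hreg : OmegaRegular L) (u v z : List A)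
    (hv : v ≠ []) : nCol L u (v ++ z) ≤ nCol L u v := by
  unfold nCol
  apply max_le_max _ le_rfl
  by_cases hur : URel L u (v ++ z)
  · have hurv : URel L u v := urel_of_urel_append hur
    unfold ncol
    rw [if_pos hur, if_pos hurv]
    obtain ⟨Q, instQ, q0, δ, α, hL⟩ := hreg
    haveI := instQ
    have hne : {c : ℕ | ColorAtMost L u c v}.Nonempty :=
      ⟨_, exists_colorAtMost δ q0 α L u hL v hv⟩
    have hmem : sInf {c : ℕ | ColorAtMost L u c v} ∈ {c : ℕ | ColorAtMost L u c v} :=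
      Nat.sInf_mem hne
    exact Nat.sInf_le (colorAtMost_append hmem z)
  · unfold ncol
    rw [if_neg hur]
    simp only [WithBot.unbotD_bot]
    exact Nat.zero_le _

end Glue

end SCCAux

/-- states in the same SCC of a colorful progress DFA agree on
acceptance, i.e. words reaching the same SCC have the same (recolored) color. -/
theorem colorful_scc_same_color {A : Type} [Inhabited A] (L : Set (ℕ → A))
    (hreg : OmegaRegular L) (u x y : List A) (hx : x ≠ []) (hy : y ≠ [])
    (z₁ z₂ : List A)
    (h1 : ∀ z : List A, nCol L u (x ++ z₁ ++ z) = nCol L u (y ++ z))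
    (h2 : ∀ z : List A, nCol L u (y ++ z₂ ++ z) = nCol L u (x ++ z)) :
    nCol L u x = nCol L u y := by
  have e1 := h1 []
  have e2 := h2 []
  simp only [List.append_nil] at e1 e2
  have m1 : nCol L u (x ++ z₁) ≤ nCol L u x := SCCAux.nCol_append_le hreg u x z₁ hx
  have m2 : nCol L u (y ++ z₂) ≤ nCol L u y := SCCAux.nCol_append_le hreg u y z₂ hy
  omega
end
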